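/- arXiv:1304.6233 — 5 statements merged into one kernel-verified Lean document; each statement's English description precedes it below -/
import Mathlib

section
/- Let A = X Z be feasible, i.e., A lies in the column space of X. Then the minimum of rank(Z) over all Z satisfying A = X Z equals rank(A), and the set of minimizers is exactly { Z = X† A + S V_Aᵀ : S is any matrix with V_Xᵀ S = 0 }, where U_A Σ_A V_Aᵀ is the skinny SVD of A. -/
open Matrix

/-- The nuclear norm of a real matrix: the sum of its singular values,
i.e. the sum of the square roots of the eigenvalues of `Aᵀ * A`. -/
noncomputable def nuclearNorm {m n : Type*} [Fintype m] [Fintype n] [DecidableEq n]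
    (A : Matrix m n ℝ) : ℝ :=
  ∑ i, Real.sqrt ((show (Aᵀ * A).IsHermitian by
    simpa [Matrix.conjTranspose_eq_transpose_of_trivial] using
      Matrix.isHermitian_conjTranspose_mul_self A).eigenvalues i)

/-- `P` is the Moore–Penrose pseudo-inverse of `X`. -/
def IsMoorePenroseInv {m n : Type*} [Fintype m] [Fintype n]
    (X : Matrix m n ℝ) (P : Matrix n m ℝ) : Prop :=
  X * P * X = X ∧ P * X * P = P ∧ (X * P)ᵀ = X * P ∧ (P * X)ᵀ = P * X

/-- `(U, σ, V)` is a skinny SVD of `X`: `U` and `V` have orthonormal columns,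
`σ` lists the (positive) nonzero singular values, `X = U * diagonal σ * Vᵀ`,
and the number of columns of `U` and `V` is `rank X`. -/
def IsSkinnySVD {m n r : ℕ} (X : Matrix (Fin m) (Fin n) ℝ)
    (U : Matrix (Fin m) (Fin r) ℝ) (σ : Fin r → ℝ) (V : Matrix (Fin n) (Fin r) ℝ) : Prop :=
  Uᵀ * U = 1 ∧ Vᵀ * V = 1 ∧ (∀ i, 0 < σ i) ∧
    X = U * Matrix.diagonal σ * Vᵀ ∧ r = X.rank

private lemma mulVec_ext' {k l : ℕ} {M N : Matrix (Fin k) (Fin l) ℝ}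
    (h : ∀ v, M *ᵥ v = N *ᵥ v) : M = N := by
  ext i j
  have := congrFun (h (Pi.single j 1)) i
  simpa [Matrix.mulVec_single] using this

/-- The minimum of `rank Z` over all `Z` with `A = X Z` equals `rank A`, and the
minimizers are exactly `Z = X† A + S V_Aᵀ` with `V_Xᵀ S = 0`. -/
theorem stmt0 {m n r rA : ℕ} (X A : Matrix (Fin m) (Fin n) ℝ) (hX : X ≠ 0)
    (P : Matrix (Fin n) (Fin m) ℝ) (hP : IsMoorePenroseInv X P)
    (UX : Matrix (Fin m) (Fin r) ℝ) (σX : Fin r → ℝ) (VX : Matrix (Fin n) (Fin r) ℝ)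
    (hXsvd : IsSkinnySVD X UX σX VX)
    (UA : Matrix (Fin m) (Fin rA) ℝ) (σA : Fin rA → ℝ) (VA : Matrix (Fin n) (Fin rA) ℝ)
    (hAsvd : IsSkinnySVD A UA σA VA)
    (hfeas : ∃ Z : Matrix (Fin n) (Fin n) ℝ, A = X * Z) :
    IsLeast {k : ℕ | ∃ Z : Matrix (Fin n) (Fin n) ℝ, A = X * Z ∧ Z.rank = k} A.rank ∧
    ∀ Z : Matrix (Fin n) (Fin n) ℝ,
      (A = X * Z ∧ Z.rank = A.rank) ↔
        ∃ S : Matrix (Fin n) (Fin rA) ℝ, VXᵀ * S = 0 ∧ Z = P * A + S * VAᵀ := by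
  obtain ⟨Z₀, hZ₀⟩ := hfeas
  obtain ⟨hUX, hVX, hσX, hXeq, -⟩ := hXsvd
  obtain ⟨hUA, hVA, hσA, hAeq, hrA⟩ := hAsvd
  have hP1 : X * P * X = X := hP.1
  have hXPA : X * (P * A) = A := by
    rw [hZ₀, ← Matrix.mul_assoc, ← Matrix.mul_assoc, hP1]
  have hAVA : A * (VA * VAᵀ) = A := by
    conv_lhs => rw [hAeq]
    rw [Matrix.mul_assoc (UA * Matrix.diagonal σA), ← Matrix.mul_assoc VAᵀ, hVA,
      Matrix.one_mul, ← hAeq]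
  have hX0 : ∀ {k : ℕ} (W : Matrix (Fin n) (Fin k) ℝ), VXᵀ * W = 0 → X * W = 0 := by
    intro k W hW
    rw [hXeq, Matrix.mul_assoc, hW, Matrix.mul_zero]
  have hX0' : ∀ (W : Matrix (Fin n) (Fin n) ℝ), X * W = 0 → VXᵀ * W = 0 := by
    intro W hW
    have h1 : UXᵀ * (X * W) = 0 := by rw [hW, Matrix.mul_zero]
    rw [hXeq, Matrix.mul_assoc UX, Matrix.mul_assoc UX, ← Matrix.mul_assoc UXᵀ, hUX,
      Matrix.one_mul] at h1
    have h2 : Matrix.diagonal (fun i => (σX i)⁻¹) * (Matrix.diagonal σX * VXᵀ * W) = 0 := by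
      rw [h1, Matrix.mul_zero]
    rwa [← Matrix.mul_assoc, ← Matrix.mul_assoc, Matrix.diagonal_mul_diagonal,
      (by funext i; exact inv_mul_cancel₀ (hσX i).ne' : (fun i => (σX i)⁻¹ * σX i) = fun _ => 1),
      Matrix.diagonal_one, Matrix.one_mul] at h2
  -- every feasible Z has rank ≥ rank A
  have hlow : ∀ Z : Matrix (Fin n) (Fin n) ℝ, A = X * Z → A.rank ≤ Z.rank := by
    intro Z hZ
    calc A.rank = (X * Z).rank := by rw [← hZ]
      _ ≤ Z.rank := Matrix.rank_mul_le_right _ _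
  -- any Z of the form P*A + S*VAᵀ with VXᵀ*S = 0 is an optimal feasible point
  have hback : ∀ (Z : Matrix (Fin n) (Fin n) ℝ) (S : Matrix (Fin n) (Fin rA) ℝ),
      VXᵀ * S = 0 → Z = P * A + S * VAᵀ → A = X * Z ∧ Z.rank = A.rank := by
    intro Z S hS hZdef
    have hfeasZ : A = X * Z := by
      rw [hZdef, Matrix.mul_add, hXPA, ← Matrix.mul_assoc, hX0 S hS, Matrix.zero_mul, add_zero]
    refine ⟨hfeasZ, le_antisymm ?_ (hlow Z hfeasZ)⟩
    have hZfact : Z = (P * (UA * Matrix.diagonal σA) + S) * VAᵀ := by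
      rw [hZdef, Matrix.add_mul]
      congr 1
      rw [hAeq, ← Matrix.mul_assoc, ← Matrix.mul_assoc]
    calc Z.rank = ((P * (UA * Matrix.diagonal σA) + S) * VAᵀ).rank := by rw [← hZfact]
      _ ≤ (P * (UA * Matrix.diagonal σA) + S).rank := Matrix.rank_mul_le_left _ _
      _ ≤ Fintype.card (Fin rA) := Matrix.rank_le_card_width _
      _ = rA := Fintype.card_fin rA
      _ = A.rank := hrA
  -- the key direction: any optimal feasible Z satisfies Z * (VA * VAᵀ) = Z
  have hkey : ∀ Z : Matrix (Fin n) (Fin n) ℝ, A = X * Z → Z.rank = A.rank →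
      Z * (VA * VAᵀ) = Z := by
    intro Z hAZ hZr
    have hrangeA_le_Z : LinearMap.range (Aᵀ).mulVecLin ≤ LinearMap.range (Zᵀ).mulVecLin := by
      have hAT : Aᵀ = Zᵀ * Xᵀ := by rw [hAZ, Matrix.transpose_mul]
      rw [hAT, Matrix.mulVecLin_mul]
      exact LinearMap.range_comp_le_range _ _
    have hfr : Module.finrank ℝ (LinearMap.range (Zᵀ).mulVecLin)
        ≤ Module.finrank ℝ (LinearMap.range (Aᵀ).mulVecLin) := by
      have h : (Zᵀ).rank ≤ (Aᵀ).rank := by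
        rw [Matrix.rank_transpose, Matrix.rank_transpose, hZr]
      exact h
    have hrangeEq := Submodule.eq_of_le_of_finrank_le hrangeA_le_Z hfr
    have hrangeZ_le_VA : LinearMap.range (Zᵀ).mulVecLin ≤ LinearMap.range VA.mulVecLin := by
      rw [← hrangeEq]
      have hAT2 : Aᵀ = VA * (Matrix.diagonal σA * UAᵀ) := by
        rw [hAeq]
        simp [Matrix.transpose_mul, Matrix.diagonal_transpose, Matrix.mul_assoc]
      rw [hAT2, Matrix.mulVecLin_mul]
      exact LinearMap.range_comp_le_range _ _
    have hZVA : VA * (VAᵀ * Zᵀ) = Zᵀ := by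
      apply mulVec_ext'
      intro v
      obtain ⟨y, hy⟩ := hrangeZ_le_VA (LinearMap.mem_range_self _ v)
      have hy' : VA *ᵥ y = Zᵀ *ᵥ v := hy
      rw [← Matrix.mulVec_mulVec, ← Matrix.mulVec_mulVec, ← hy', Matrix.mulVec_mulVec,
        Matrix.mulVec_mulVec, Matrix.mul_assoc, hVA, Matrix.mul_one]
    have h := congrArg Matrix.transpose hZVA
    simpa [Matrix.transpose_mul, Matrix.mul_assoc] using h
  constructor
  · constructor
    · exact ⟨P * A, (hback (P * A) 0 (by rw [Matrix.mul_zero]) (by rw [Matrix.zero_mul, add_zero])).1,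
        (hback (P * A) 0 (by rw [Matrix.mul_zero]) (by rw [Matrix.zero_mul, add_zero])).2⟩
    · rintro k ⟨Z, hZ, rfl⟩
      exact hlow Z hZ
  · intro Z
    constructor
    · rintro ⟨hAZ, hZr⟩
      refine ⟨(Z - P * A) * VA, ?_, ?_⟩
      · have hW0 : X * (Z - P * A) = 0 := by
          rw [Matrix.mul_sub, hXPA, ← hAZ, sub_self]
        rw [← Matrix.mul_assoc, hX0' _ hW0, Matrix.zero_mul]
      · have h1 : (Z - P * A) * VA * VAᵀ = Z - P * A := by
          rw [Matrix.mul_assoc, Matrix.sub_mul, hkey Z hAZ hZr, Matrix.mul_assoc P A, hAVA]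
        rw [h1]
        abel
    · rintro ⟨S, hS, hZdef⟩
      exact hback Z S hS hZdef
end

section
/- If (Z*, L*) is an optimal solution to the original LatLRR problem (minimize rank(Z) + rank(L) subject to X = X Z + L X), then there exists another optimal solution (Z̃, L̃) such that X Z* = X Z̃ and Z̃ = V_X W̃ V_Xᵀ for some square matrix W̃ of size rank(X); specifically one may take W̃ = V_Xᵀ Z* V_X and L̃ = X(I − V_X W̃ V_Xᵀ) X†. -/
open Matrix

/-- If `(Z*, L*)` is optimal for the original LatLRR problem, then taking
`W̃ = V_Xᵀ Z* V_X`, `Z̃ = V_X W̃ V_Xᵀ` and `L̃ = X (I − Z̃) X†` yields another optimal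
solution with `X Z* = X Z̃`. -/
theorem stmt3 {m n r : ℕ} (X : Matrix (Fin m) (Fin n) ℝ) (hX : X ≠ 0)
    (P : Matrix (Fin n) (Fin m) ℝ) (hP : IsMoorePenroseInv X P)
    (UX : Matrix (Fin m) (Fin r) ℝ) (σX : Fin r → ℝ) (VX : Matrix (Fin n) (Fin r) ℝ)
    (hsvd : IsSkinnySVD X UX σX VX)
    (Zs : Matrix (Fin n) (Fin n) ℝ) (Ls : Matrix (Fin m) (Fin m) ℝ)
    (hfeas : X = X * Zs + Ls * X)
    (hopt : ∀ (Z : Matrix (Fin n) (Fin n) ℝ) (L : Matrix (Fin m) (Fin m) ℝ),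
      X = X * Z + L * X → Zs.rank + Ls.rank ≤ Z.rank + L.rank) :
    X = X * (VX * (VXᵀ * Zs * VX) * VXᵀ) + (X * (1 - VX * (VXᵀ * Zs * VX) * VXᵀ) * P) * X ∧
    (∀ (Z : Matrix (Fin n) (Fin n) ℝ) (L : Matrix (Fin m) (Fin m) ℝ),
      X = X * Z + L * X →
        (VX * (VXᵀ * Zs * VX) * VXᵀ).rank + (X * (1 - VX * (VXᵀ * Zs * VX) * VXᵀ) * P).rank
          ≤ Z.rank + L.rank) ∧
    X * Zs = X * (VX * (VXᵀ * Zs * VX) * VXᵀ) := by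
  obtain ⟨hPXP1, hPXP2, hXPsym, hPXsym⟩ := hP
  obtain ⟨hU, hV, hσ, hXdecomp, hr⟩ := hsvd
  set Zt := VX * (VXᵀ * Zs * VX) * VXᵀ with hZt
  have hA : X * VX * VXᵀ = X := by
    rw [hXdecomp]
    calc UX * Matrix.diagonal σX * VXᵀ * VX * VXᵀ
        = UX * Matrix.diagonal σX * (VXᵀ * VX) * VXᵀ := by
          simp only [Matrix.mul_assoc]
      _ = UX * Matrix.diagonal σX * VXᵀ := by rw [hV, Matrix.mul_one]
  have hXZsL : X * Zs = X - Ls * X := eq_sub_of_add_eq hfeas.symm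
  have h1 : X * Zt = X * Zs * VX * VXᵀ := by
    rw [hZt]
    calc X * (VX * (VXᵀ * Zs * VX) * VXᵀ)
        = X * VX * VXᵀ * Zs * (VX * VXᵀ) := by simp only [Matrix.mul_assoc]
      _ = X * Zs * (VX * VXᵀ) := by rw [hA]
      _ = X * Zs * VX * VXᵀ := by simp only [Matrix.mul_assoc]
  have hZtZs : X * Zt = X * Zs := by
    rw [h1, hXZsL, Matrix.sub_mul, Matrix.sub_mul]
    rw [hA, Matrix.mul_assoc (Ls * X) VX VXᵀ, Matrix.mul_assoc Ls X (VX * VXᵀ),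
      ← Matrix.mul_assoc X VX VXᵀ, hA]
  have hL : X * (1 - Zt) * P = Ls * (X * P) := by
    rw [Matrix.mul_sub, Matrix.mul_one, hZtZs, hXZsL, sub_sub_cancel, Matrix.mul_assoc]
  refine ⟨?_, ?_, hZtZs.symm⟩
  · rw [hL, Matrix.mul_assoc Ls (X * P) X, hPXP1, hZtZs]
    exact hfeas
  · intro Z L hZL
    have hrZ : Zt.rank ≤ Zs.rank := by
      calc Zt.rank ≤ (VX * (VXᵀ * Zs * VX)).rank := Matrix.rank_mul_le_left _ _
        _ ≤ (VXᵀ * Zs * VX).rank := Matrix.rank_mul_le_right _ _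
        _ ≤ (VXᵀ * Zs).rank := Matrix.rank_mul_le_left _ _
        _ ≤ Zs.rank := Matrix.rank_mul_le_right _ _
    have hrL : (X * (1 - Zt) * P).rank ≤ Ls.rank := by
      rw [hL]; exact Matrix.rank_mul_le_left _ _
    calc Zt.rank + (X * (1 - Zt) * P).rank ≤ Zs.rank + Ls.rank :=
          Nat.add_le_add hrZ hrL
      _ ≤ Z.rank + L.rank := hopt Z L hZL
end

section
/- Every optimal solution Z* of the unconstrained problem of minimizing f(Z) = ‖Z‖_* + ‖X (I − Z) X†‖_* can be written as Z* = V_X Ŵ V_Xᵀ, where Ŵ = V_Xᵀ Z* V_X is a square matrix of size rank(X); equivalently, V_X V_Xᵀ Z* V_X V_Xᵀ = Z*. -/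
open Matrix

namespace Stmt12Aux

lemma dot_sq_le {k : ℕ} (u v : Fin k → ℝ) : (u ⬝ᵥ v)^2 ≤ (u ⬝ᵥ u) * (v ⬝ᵥ v) := by
  simpa [dotProduct, sq] using Finset.sum_mul_sq_le_sq_mul_sq Finset.univ u v

lemma mulVec_dot {a b : ℕ} (M : Matrix (Fin a) (Fin b) ℝ) (v : Fin b → ℝ) (u : Fin a → ℝ) :
    (M *ᵥ v) ⬝ᵥ u = v ⬝ᵥ (Mᵀ *ᵥ u) := by
  simp only [dotProduct, mulVec, transpose_apply, Finset.sum_mul, Finset.mul_sum]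
  rw [Finset.sum_comm]
  exact Finset.sum_congr rfl fun i _ => Finset.sum_congr rfl fun j _ => by ring

lemma mulVec_dot_self {a b : ℕ} (M : Matrix (Fin a) (Fin b) ℝ) (v : Fin b → ℝ) :
    (M *ᵥ v) ⬝ᵥ (M *ᵥ v) = v ⬝ᵥ ((Mᵀ * M) *ᵥ v) := by
  rw [mulVec_dot, mulVec_mulVec]

lemma dot_self_nonneg {k : ℕ} (v : Fin k → ℝ) : 0 ≤ v ⬝ᵥ v :=
  Finset.sum_nonneg fun i _ => mul_self_nonneg _

lemma dot_idem_le {k : ℕ} (S : Matrix (Fin k) (Fin k) ℝ) (hs : Sᵀ = S) (hi : S * S = S)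
    (u : Fin k → ℝ) : u ⬝ᵥ (S *ᵥ u) ≤ u ⬝ᵥ u := by
  have h1 : (1 - S)ᵀ * (1 - S) = 1 - S := by
    rw [transpose_sub, transpose_one, hs, mul_sub, sub_mul, sub_mul, hi, one_mul, mul_one]
    abel_nf
    rw [one_mul]
  have h2 : 0 ≤ u ⬝ᵥ ((1 - S) *ᵥ u) := by
    have := dot_self_nonneg ((1 - S) *ᵥ u)
    rwa [mulVec_dot_self, h1] at this
  have h3 : u ⬝ᵥ ((1 - S) *ᵥ u) = u ⬝ᵥ u - u ⬝ᵥ (S *ᵥ u) := by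
    rw [sub_mulVec, dotProduct_sub, one_mulVec]
  linarith [h2, h3.symm.le]

lemma frob_bound {a b : ℕ} (C : Matrix (Fin a) (Fin b) ℝ) (v : Fin b → ℝ) :
    (C *ᵥ v) ⬝ᵥ (C *ᵥ v) ≤ (∑ i, ∑ j, (C i j)^2) * (v ⬝ᵥ v) := by
  have h1 : ∀ i, ((C *ᵥ v) i)^2 ≤ (∑ j, (C i j)^2) * (v ⬝ᵥ v) := by
    intro i
    calc ((C *ᵥ v) i)^2 = ((fun j => C i j) ⬝ᵥ v)^2 := rfl
      _ ≤ ((fun j => C i j) ⬝ᵥ (fun j => C i j)) * (v ⬝ᵥ v) := dot_sq_le _ v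
      _ = (∑ j, (C i j)^2) * (v ⬝ᵥ v) := by simp [dotProduct, sq]
  calc (C *ᵥ v) ⬝ᵥ (C *ᵥ v) = ∑ i, ((C *ᵥ v) i)^2 := by simp [dotProduct, sq]
    _ ≤ ∑ i, (∑ j, (C i j)^2) * (v ⬝ᵥ v) := Finset.sum_le_sum fun i _ => h1 i
    _ = (∑ i, ∑ j, (C i j)^2) * (v ⬝ᵥ v) := (Finset.sum_mul _ _ _).symm

lemma nuclearNorm_nonneg {a b : ℕ} (A : Matrix (Fin a) (Fin b) ℝ) : 0 ≤ nuclearNorm A :=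
  Finset.sum_nonneg fun i _ => Real.sqrt_nonneg _

lemma eq_zero_of_trace_transpose_mul_self {a b : ℕ} (R : Matrix (Fin a) (Fin b) ℝ)
    (h : Matrix.trace (Rᵀ * R) = 0) : R = 0 := by
  have hexp : Matrix.trace (Rᵀ * R) = ∑ j, ∑ i, (R i j)^2 := by
    simp [Matrix.trace, Matrix.diag, Matrix.mul_apply, sq]
  rw [hexp] at h
  have h1 := (Finset.sum_eq_zero_iff_of_nonneg
    (fun j _ => Finset.sum_nonneg fun i _ => sq_nonneg (R i j))).mp h
  ext i j
  have h2 := (Finset.sum_eq_zero_iff_of_nonneg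
    (fun i _ => sq_nonneg (R i j))).mp (h1 j (Finset.mem_univ _)) i (Finset.mem_univ _)
  simpa using pow_eq_zero_iff two_ne_zero |>.mp h2

lemma sqrt_one_add_le (x : ℝ) (hx : 0 ≤ x) : Real.sqrt (1 + x) ≤ 1 + x/2 := by
  have h := Real.sqrt_le_sqrt (show (1:ℝ) + x ≤ (1 + x/2)^2 by nlinarith)
  rwa [Real.sqrt_sq (by linarith)] at h

lemma spectral_pack {a b : ℕ} (A : Matrix (Fin a) (Fin b) ℝ) :
    ∃ V : Matrix (Fin b) (Fin b) ℝ, ∃ lam : Fin b → ℝ,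
      Vᵀ * V = 1 ∧ V * Vᵀ = 1 ∧ Aᵀ * A = V * Matrix.diagonal lam * Vᵀ ∧
      (A * V)ᵀ * (A * V) = Matrix.diagonal lam ∧
      (∀ i, 0 ≤ lam i) ∧ nuclearNorm A = ∑ i, Real.sqrt (lam i) := by
  have hH : (Aᵀ * A).IsHermitian := by
    simpa [Matrix.conjTranspose_eq_transpose_of_trivial] using
      Matrix.isHermitian_conjTranspose_mul_self A
  set lam := hH.eigenvalues with hlam
  set V : Matrix (Fin b) (Fin b) ℝ := (hH.eigenvectorUnitary : Matrix (Fin b) (Fin b) ℝ) with hV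
  have hstar : star V = Vᵀ := by
    rw [Matrix.star_eq_conjTranspose, conjTranspose_eq_transpose_of_trivial]
  have hVVt : V * Vᵀ = 1 := by
    rw [← hstar]; exact Matrix.mem_unitaryGroup_iff.mp (hH.eigenvectorUnitary).2
  have hVV : Vᵀ * V = 1 := by
    rw [← hstar]; exact Matrix.mem_unitaryGroup_iff'.mp (hH.eigenvectorUnitary).2
  have hAH : Aᴴ = Aᵀ := conjTranspose_eq_transpose_of_trivial A
  have hspec : Aᵀ * A = V * Matrix.diagonal lam * Vᵀ := by
    have h0 := hH.spectral_theorem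
    rw [Unitary.conjStarAlgAut_apply] at h0
    rw [hstar] at h0
    rw [h0, RCLike.ofReal_real_eq_id, Function.id_comp]
  refine ⟨V, lam, hVV, hVVt, hspec, ?_, fun i => Matrix.eigenvalues_conjTranspose_mul_self_nonneg A i, rfl⟩
  rw [transpose_mul]
  calc Vᵀ * Aᵀ * (A * V) = Vᵀ * (Aᵀ * A) * V := by simp only [Matrix.mul_assoc]
    _ = Vᵀ * V * Matrix.diagonal lam * (Vᵀ * V) := by rw [hspec]; simp only [Matrix.mul_assoc]
    _ = Matrix.diagonal lam := by rw [hVV, one_mul, mul_one]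


lemma lemD {a b : ℕ} (A Y : Matrix (Fin a) (Fin b) ℝ) (c : ℝ) (hc : 0 ≤ c)
    (h : ∀ u v, (u ⬝ᵥ (Y *ᵥ v))^2 ≤ c^2 * ((u ⬝ᵥ u) * (v ⬝ᵥ v))) :
    Matrix.trace (Yᵀ * A) ≤ c * nuclearNorm A := by
  obtain ⟨V, lam, hVV, hVVt, hspec, hGG, hlam0, hNN⟩ := spectral_pack A
  have htr : Matrix.trace (Yᵀ * A)
      = ∑ i, ((A *ᵥ fun j => V j i) ⬝ᵥ (Y *ᵥ fun j => V j i)) := by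
    have e1 : Matrix.trace (Yᵀ * A) = Matrix.trace ((Y * V)ᵀ * (A * V)) := by
      have e2 : A * V * (Vᵀ * Yᵀ) = A * Yᵀ := by
        calc A * V * (Vᵀ * Yᵀ) = A * (V * Vᵀ * Yᵀ) := by simp only [Matrix.mul_assoc]
          _ = A * Yᵀ := by rw [hVVt, Matrix.one_mul]
      rw [transpose_mul, Matrix.trace_mul_comm (Vᵀ * Yᵀ) (A * V), e2,
        Matrix.trace_mul_comm A Yᵀ]
    rw [e1]
    simp only [Matrix.trace, Matrix.diag, Matrix.mul_apply, transpose_apply, dotProduct,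
      mulVec, dotProduct]
    exact Finset.sum_congr rfl fun i _ => Finset.sum_congr rfl fun k _ => by ring
  have hterm : ∀ i, ((A *ᵥ fun j => V j i) ⬝ᵥ (Y *ᵥ fun j => V j i)) ≤ c * Real.sqrt (lam i) := by
    intro i
    have hv1 : (fun j => V j i) ⬝ᵥ (fun j => V j i) = 1 := by
      have e : (Vᵀ * V) i i = (1 : Matrix (Fin b) (Fin b) ℝ) i i := by rw [hVV]
      simpa [Matrix.mul_apply, transpose_apply, dotProduct, Matrix.one_apply] using e
    have hAv : (A *ᵥ fun j => V j i) ⬝ᵥ (A *ᵥ fun j => V j i) = lam i := by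
      have e : ((A * V)ᵀ * (A * V)) i i = Matrix.diagonal lam i i := by rw [hGG]
      simpa [Matrix.mul_apply, transpose_apply, dotProduct, mulVec,
        Matrix.diagonal_apply_eq, mul_comm] using e
    have h2 := h (A *ᵥ fun j => V j i) (fun j => V j i)
    rw [hAv, hv1] at h2
    calc ((A *ᵥ fun j => V j i) ⬝ᵥ (Y *ᵥ fun j => V j i))
        ≤ |((A *ᵥ fun j => V j i) ⬝ᵥ (Y *ᵥ fun j => V j i))| := le_abs_self _
      _ = Real.sqrt (((A *ᵥ fun j => V j i) ⬝ᵥ (Y *ᵥ fun j => V j i))^2) :=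
          (Real.sqrt_sq_eq_abs _).symm
      _ ≤ Real.sqrt (c^2 * (lam i * 1)) := Real.sqrt_le_sqrt h2
      _ = c * Real.sqrt (lam i) := by
          rw [mul_one, Real.sqrt_mul (sq_nonneg c), Real.sqrt_sq hc]
  rw [htr, hNN, Finset.mul_sum]
  exact Finset.sum_le_sum fun i _ => hterm i

lemma lemE {a b : ℕ} (A : Matrix (Fin a) (Fin b) ℝ) :
    ∃ W : Matrix (Fin a) (Fin b) ℝ,
      Matrix.trace (Wᵀ * A) = nuclearNorm A ∧
      (∀ v, (W *ᵥ v) ⬝ᵥ (W *ᵥ v) ≤ v ⬝ᵥ v) ∧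
      (∀ u, (Wᵀ *ᵥ u) ⬝ᵥ (Wᵀ *ᵥ u) ≤ u ⬝ᵥ u) := by
  classical
  obtain ⟨V, lam, hVV, hVVt, hspec, hGG, hlam0, hNN⟩ := spectral_pack A
  set τ : Fin b → ℝ := fun i => if 0 < lam i then (Real.sqrt (lam i))⁻¹ else 0 with hτ
  have hτlam : ∀ i, τ i * lam i = Real.sqrt (lam i) := by
    intro i
    by_cases hpos : 0 < lam i
    · have hs : Real.sqrt (lam i) ≠ 0 := ne_of_gt (Real.sqrt_pos.mpr hpos)
      have hms : Real.sqrt (lam i) * Real.sqrt (lam i) = lam i := Real.mul_self_sqrt (hlam0 i)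
      simp only [hτ, hpos, if_true]
      field_simp
      rw [sq, hms]
    · have h0 : lam i = 0 := le_antisymm (not_lt.mp hpos) (hlam0 i)
      simp [hτ, hpos, h0]
  have hd : ∀ i, τ i * lam i * τ i = if 0 < lam i then 1 else 0 := by
    intro i
    by_cases hpos : 0 < lam i
    · rw [hτlam i]
      simp only [hτ, hpos, if_true]
      exact mul_inv_cancel₀ (ne_of_gt (Real.sqrt_pos.mpr hpos))
    · simp [hτ, hpos]
  have hVred : ∀ {p : ℕ} (M : Matrix (Fin b) (Fin p) ℝ), Vᵀ * (V * M) = M := by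
    intro p M; rw [← Matrix.mul_assoc, hVV, Matrix.one_mul]
  set W := A * V * Matrix.diagonal τ * Vᵀ with hW
  have hWt : Wᵀ = V * Matrix.diagonal τ * (A * V)ᵀ := by
    rw [hW, transpose_mul, transpose_mul, transpose_transpose, diagonal_transpose]
    simp only [Matrix.mul_assoc]
  have hGA : (A * V)ᵀ * A = Matrix.diagonal lam * Vᵀ := by
    rw [transpose_mul]
    calc Vᵀ * Aᵀ * A = Vᵀ * (Aᵀ * A) := by simp only [Matrix.mul_assoc]
      _ = Vᵀ * V * Matrix.diagonal lam * Vᵀ := by rw [hspec]; simp only [Matrix.mul_assoc]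
      _ = Matrix.diagonal lam * Vᵀ := by rw [hVV, Matrix.one_mul]
  have htrace : Matrix.trace (Wᵀ * A) = nuclearNorm A := by
    have e1 : Wᵀ * A = V * Matrix.diagonal (fun i => τ i * lam i) * Vᵀ := by
      rw [hWt]
      calc V * Matrix.diagonal τ * (A*V)ᵀ * A
          = V * Matrix.diagonal τ * ((A*V)ᵀ * A) := by simp only [Matrix.mul_assoc]
        _ = V * Matrix.diagonal τ * (Matrix.diagonal lam * Vᵀ) := by rw [hGA]
        _ = V * (Matrix.diagonal τ * Matrix.diagonal lam) * Vᵀ := by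
            simp only [Matrix.mul_assoc]
        _ = V * Matrix.diagonal (fun i => τ i * lam i) * Vᵀ := by
            rw [diagonal_mul_diagonal]
    rw [e1, Matrix.trace_mul_comm, ← Matrix.mul_assoc, hVV, Matrix.one_mul,
      Matrix.trace_diagonal, hNN]
    exact Finset.sum_congr rfl fun i _ => hτlam i
  have hWtW : Wᵀ * W = V * Matrix.diagonal (fun i => τ i * lam i * τ i) * Vᵀ := by
    rw [hWt, hW]
    calc V * Matrix.diagonal τ * (A*V)ᵀ * (A * V * Matrix.diagonal τ * Vᵀ)
        = V * Matrix.diagonal τ * ((A*V)ᵀ * (A*V)) * (Matrix.diagonal τ * Vᵀ) := by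
          simp only [Matrix.mul_assoc]
      _ = V * (Matrix.diagonal τ * Matrix.diagonal lam * Matrix.diagonal τ) * Vᵀ := by
          rw [hGG]; simp only [Matrix.mul_assoc]
      _ = _ := by rw [diagonal_mul_diagonal, diagonal_mul_diagonal]
  have hWtWidem : (Wᵀ * W) * (Wᵀ * W) = Wᵀ * W := by
    rw [hWtW]
    calc V * Matrix.diagonal (fun i => τ i * lam i * τ i) * Vᵀ *
          (V * Matrix.diagonal (fun i => τ i * lam i * τ i) * Vᵀ)
        = V * (Matrix.diagonal (fun i => τ i * lam i * τ i) *
            (Vᵀ * (V * (Matrix.diagonal (fun i => τ i * lam i * τ i) * Vᵀ)))) := by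
          simp only [Matrix.mul_assoc]
      _ = V * (Matrix.diagonal (fun i => τ i * lam i * τ i) *
            (Matrix.diagonal (fun i => τ i * lam i * τ i) * Vᵀ)) := by rw [hVred]
      _ = V * Matrix.diagonal (fun i => τ i * lam i * τ i) * Vᵀ := by
          have hdd : (fun i => τ i * lam i * τ i * (τ i * lam i * τ i))
              = (fun i => τ i * lam i * τ i) := funext fun i => by
            rw [hd i]; by_cases hpos : 0 < lam i <;> simp [hpos]
          rw [← Matrix.mul_assoc (Matrix.diagonal _) (Matrix.diagonal _) Vᵀ,
            diagonal_mul_diagonal, hdd]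
          simp only [Matrix.mul_assoc]
  have hWtWsym : (Wᵀ * W)ᵀ = Wᵀ * W := by rw [transpose_mul, transpose_transpose]
  have hscalar : ∀ i, τ i * τ i * lam i * (τ i * τ i) = τ i * τ i := by
    intro i
    by_cases hpos : 0 < lam i
    · calc τ i * τ i * lam i * (τ i * τ i) = (τ i * lam i * τ i) * (τ i * τ i) := by ring
        _ = τ i * τ i := by rw [hd i]; simp [hpos]
    · simp [hτ, hpos]
  have hWWt : W * Wᵀ = (A*V) * Matrix.diagonal (fun i => τ i * τ i) * (A*V)ᵀ := by
    rw [hW, hWt]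
    calc A * V * Matrix.diagonal τ * Vᵀ * (V * Matrix.diagonal τ * (A*V)ᵀ)
        = A * V * (Matrix.diagonal τ * (Vᵀ * (V * (Matrix.diagonal τ * (A*V)ᵀ)))) := by
          simp only [Matrix.mul_assoc]
      _ = A * V * (Matrix.diagonal τ * (Matrix.diagonal τ * (A*V)ᵀ)) := by rw [hVred]
      _ = _ := by
          rw [← Matrix.mul_assoc (Matrix.diagonal τ) (Matrix.diagonal τ) ((A*V)ᵀ),
            diagonal_mul_diagonal]
          simp only [Matrix.mul_assoc]
  have hWWtidem : (W * Wᵀ) * (W * Wᵀ) = W * Wᵀ := by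
    rw [hWWt]
    calc (A*V) * Matrix.diagonal (fun i => τ i * τ i) * (A*V)ᵀ *
          ((A*V) * Matrix.diagonal (fun i => τ i * τ i) * (A*V)ᵀ)
        = (A*V) * Matrix.diagonal (fun i => τ i * τ i) * ((A*V)ᵀ * (A*V)) *
            (Matrix.diagonal (fun i => τ i * τ i) * (A*V)ᵀ) := by
          simp only [Matrix.mul_assoc]
      _ = (A*V) * (Matrix.diagonal (fun i => τ i * τ i) * Matrix.diagonal lam *
            Matrix.diagonal (fun i => τ i * τ i)) * (A*V)ᵀ := by
          rw [hGG]; simp only [Matrix.mul_assoc]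
      _ = (A*V) * Matrix.diagonal (fun i => τ i * τ i) * (A*V)ᵀ := by
          rw [diagonal_mul_diagonal, diagonal_mul_diagonal,
            show (fun i => τ i * τ i * lam i * (τ i * τ i)) = (fun i => τ i * τ i) from
              funext hscalar]
  have hWWtsym : (W * Wᵀ)ᵀ = W * Wᵀ := by rw [transpose_mul, transpose_transpose]
  refine ⟨W, htrace, ?_, ?_⟩
  · intro v
    rw [mulVec_dot_self]
    exact dot_idem_le _ hWtWsym hWtWidem v
  · intro u
    rw [mulVec_dot_self, transpose_transpose]
    exact dot_idem_le _ hWWtsym hWWtidem u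


lemma quad_zero {t K : ℝ} (hK : 0 ≤ K) (h : ∀ s : ℝ, s * t ≤ K * s^2) : t = 0 := by
  have hK1 : (0:ℝ) < K + 1 := by linarith
  have h1 := h (t / (K + 1))
  have e1 : (t / (K + 1)) * t = t^2 / (K + 1) := by ring
  have e2 : K * (t / (K + 1))^2 = K * t^2 / (K + 1)^2 := by rw [div_pow, mul_div_assoc]
  rw [e1, e2, div_le_div_iff₀ hK1 (pow_pos hK1 2)] at h1
  have ht2 : t^2 ≤ 0 := by nlinarith [sq_nonneg t, hK]
  have h0 : t^2 = 0 := le_antisymm ht2 (sq_nonneg t)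
  exact pow_eq_zero_iff two_ne_zero |>.mp h0

lemma perturb_zero {k : ℕ} (A W' C' : Matrix (Fin k) (Fin k) ℝ)
    (htrW : nuclearNorm A ≤ Matrix.trace (W'ᵀ * A))
    (hcontr : ∀ s : ℝ, ∀ u v : Fin k → ℝ,
        (u ⬝ᵥ ((W' + s • C') *ᵥ v))^2
          ≤ (1 + s^2 * (∑ i, ∑ j, (C' i j)^2)) * ((u ⬝ᵥ u) * (v ⬝ᵥ v))) :
    Matrix.trace (C'ᵀ * A) = 0 := by
  set M2 := ∑ i, ∑ j, (C' i j)^2 with hM2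
  have hM2nn : 0 ≤ M2 := Finset.sum_nonneg fun i _ => Finset.sum_nonneg fun j _ => sq_nonneg _
  have hNnn : 0 ≤ nuclearNorm A := nuclearNorm_nonneg A
  set N := nuclearNorm A with hN
  set t := Matrix.trace (C'ᵀ * A) with ht
  have key : ∀ s : ℝ, s * t ≤ (N * M2 / 2) * s^2 := by
    intro s
    have hcnn : (0:ℝ) ≤ Real.sqrt (1 + s^2 * M2) := Real.sqrt_nonneg _
    have h1s : (0:ℝ) ≤ 1 + s^2 * M2 := by nlinarith [sq_nonneg s, hM2nn]
    have hcsq : (Real.sqrt (1 + s^2 * M2))^2 = 1 + s^2 * M2 := Real.sq_sqrt h1s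
    have hD := lemD A (W' + s • C') (Real.sqrt (1 + s^2 * M2)) hcnn
      (by intro u v; rw [hcsq]; exact hcontr s u v)
    have htrlin : Matrix.trace ((W' + s • C')ᵀ * A) = Matrix.trace (W'ᵀ * A) + s * t := by
      rw [transpose_add, transpose_smul, Matrix.add_mul, Matrix.smul_mul, Matrix.trace_add,
        Matrix.trace_smul, ht, smul_eq_mul]
    have hsqrt := sqrt_one_add_le (s^2 * M2) (by nlinarith [sq_nonneg s, hM2nn])
    rw [htrlin] at hD
    have hs2 : Real.sqrt (1 + s^2 * M2) * N ≤ (1 + s^2 * M2 / 2) * N :=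
      mul_le_mul_of_nonneg_right hsqrt hNnn
    nlinarith [htrW, hD, hs2]
  exact quad_zero (by nlinarith [hNnn, hM2nn]) key

lemma lemF {k : ℕ} (Q A : Matrix (Fin k) (Fin k) ℝ) (hQt : Qᵀ = Q) (hQi : Q * Q = Q)
    (h : nuclearNorm A ≤ nuclearNorm (Q * A * Q)) : A = Q * A * Q := by
  obtain ⟨W, hWtr, hWcol, hWrow⟩ := lemE (Q * A * Q)
  set W' := Q * W * Q with hW'
  have hQ0 : Q * (1 - Q) = 0 := by rw [Matrix.mul_sub, Matrix.mul_one, hQi, sub_self]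
  have h1Q : (1 - Q) * (1 - Q) = 1 - Q := by
    rw [Matrix.sub_mul, Matrix.one_mul, Matrix.mul_sub, Matrix.mul_one, hQi]
    abel
  have h1Qt : (1 - Q)ᵀ = 1 - Q := by rw [transpose_sub, transpose_one, hQt]
  have hQcontr : ∀ v, (Q *ᵥ v) ⬝ᵥ (Q *ᵥ v) ≤ v ⬝ᵥ v := by
    intro v
    rw [mulVec_dot_self, hQt, hQi]
    exact dot_idem_le Q hQt hQi v
  have hW't : W'ᵀ = Q * Wᵀ * Q := by
    rw [hW', transpose_mul, transpose_mul, hQt, Matrix.mul_assoc]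
  have hW'col : ∀ v, (W' *ᵥ v) ⬝ᵥ (W' *ᵥ v) ≤ v ⬝ᵥ v := by
    intro v
    have e : W' *ᵥ v = Q *ᵥ (W *ᵥ (Q *ᵥ v)) := by rw [hW', ← mulVec_mulVec, ← mulVec_mulVec]
    rw [e]
    exact le_trans (hQcontr _) (le_trans (hWcol _) (hQcontr v))
  have hW'row : ∀ u, (W'ᵀ *ᵥ u) ⬝ᵥ (W'ᵀ *ᵥ u) ≤ u ⬝ᵥ u := by
    intro u
    have e : W'ᵀ *ᵥ u = Q *ᵥ (Wᵀ *ᵥ (Q *ᵥ u)) := by rw [hW't, ← mulVec_mulVec, ← mulVec_mulVec]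
    rw [e]
    exact le_trans (hQcontr _) (le_trans (hWrow _) (hQcontr u))
  have htrW : nuclearNorm A ≤ Matrix.trace (W'ᵀ * A) := by
    have e1 : W'ᵀ * A = Q * (Wᵀ * (Q * A)) := by rw [hW't]; simp only [Matrix.mul_assoc]
    have e2 : Wᵀ * (Q * A) * Q = Wᵀ * (Q * A * Q) := by simp only [Matrix.mul_assoc]
    rw [e1, Matrix.trace_mul_comm, e2, hWtr]
    exact h
  -- left block : (1 - Q) * A = 0
  have hL : (1 - Q) * A = 0 := by
    set C' := (1 - Q) * A with hC'
    have hcross : W'ᵀ * C' = 0 := by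
      rw [hW't, hC']
      calc Q * Wᵀ * Q * ((1 - Q) * A) = Q * Wᵀ * (Q * (1 - Q)) * A := by
            simp only [Matrix.mul_assoc]
        _ = 0 := by rw [hQ0, Matrix.mul_zero, Matrix.zero_mul]
    have hcontr : ∀ s : ℝ, ∀ u v : Fin k → ℝ,
        (u ⬝ᵥ ((W' + s • C') *ᵥ v))^2
          ≤ (1 + s^2 * (∑ i, ∑ j, (C' i j)^2)) * ((u ⬝ᵥ u) * (v ⬝ᵥ v)) := by
      intro s u v
      have hYv : ((W' + s • C') *ᵥ v) ⬝ᵥ ((W' + s • C') *ᵥ v)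
          ≤ (1 + s^2 * (∑ i, ∑ j, (C' i j)^2)) * (v ⬝ᵥ v) := by
        have hsplit : (W' + s • C') *ᵥ v = W' *ᵥ v + s • (C' *ᵥ v) := by
          rw [Matrix.add_mulVec, Matrix.smul_mulVec]
        have hcr : (W' *ᵥ v) ⬝ᵥ (C' *ᵥ v) = 0 := by
          rw [mulVec_dot, mulVec_mulVec, hcross, Matrix.zero_mulVec, dotProduct_zero]
        have hcr2 : (C' *ᵥ v) ⬝ᵥ (W' *ᵥ v) = 0 := by rw [dotProduct_comm]; exact hcr
        rw [hsplit]
        rw [dotProduct_add, add_dotProduct, add_dotProduct, dotProduct_smul, smul_dotProduct,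
          smul_dotProduct, dotProduct_smul, hcr, hcr2]
        have hfrob := frob_bound C' v
        have hWv := hW'col v
        simp only [smul_eq_mul, mul_zero, add_zero, zero_add]
        nlinarith [hfrob, hWv, dot_self_nonneg v]
      have hcs := dot_sq_le u ((W' + s • C') *ᵥ v)
      have hunn : 0 ≤ u ⬝ᵥ u := dot_self_nonneg u
      nlinarith [hYv, hcs, hunn]
    have ht0 := perturb_zero A W' C' htrW hcontr
    apply eq_zero_of_trace_transpose_mul_self
    have e : C'ᵀ * C' = C'ᵀ * A := by
      rw [hC', transpose_mul, h1Qt]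
      calc Aᵀ * (1 - Q) * ((1 - Q) * A) = Aᵀ * ((1 - Q) * (1 - Q)) * A := by
            simp only [Matrix.mul_assoc]
        _ = Aᵀ * (1 - Q) * A := by rw [h1Q]
    rw [e, ht0]
  -- right block : A * (1 - Q) = 0
  have hR : A * (1 - Q) = 0 := by
    set C' := A * (1 - Q) with hC'
    have hC't : C'ᵀ = (1 - Q) * Aᵀ := by rw [hC', transpose_mul, h1Qt]
    have hcross : W' * C'ᵀ = 0 := by
      rw [hW', hC't]
      calc Q * W * Q * ((1 - Q) * Aᵀ) = Q * W * (Q * (1 - Q)) * Aᵀ := by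
            simp only [Matrix.mul_assoc]
        _ = 0 := by rw [hQ0, Matrix.mul_zero, Matrix.zero_mul]
    have hcontr : ∀ s : ℝ, ∀ u v : Fin k → ℝ,
        (u ⬝ᵥ ((W' + s • C') *ᵥ v))^2
          ≤ (1 + s^2 * (∑ i, ∑ j, (C' i j)^2)) * ((u ⬝ᵥ u) * (v ⬝ᵥ v)) := by
      intro s u v
      have hfrobT : (∑ i, ∑ j, ((C'ᵀ) i j)^2) = (∑ i, ∑ j, (C' i j)^2) := by
        rw [Finset.sum_comm]
        exact Finset.sum_congr rfl fun i _ => Finset.sum_congr rfl fun j _ => rfl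
      have hYu : ((W' + s • C')ᵀ *ᵥ u) ⬝ᵥ ((W' + s • C')ᵀ *ᵥ u)
          ≤ (1 + s^2 * (∑ i, ∑ j, (C' i j)^2)) * (u ⬝ᵥ u) := by
        have hsplit : (W' + s • C')ᵀ *ᵥ u = W'ᵀ *ᵥ u + s • (C'ᵀ *ᵥ u) := by
          rw [transpose_add, transpose_smul, Matrix.add_mulVec, Matrix.smul_mulVec]
        have hcr : (W'ᵀ *ᵥ u) ⬝ᵥ (C'ᵀ *ᵥ u) = 0 := by
          rw [mulVec_dot, transpose_transpose, mulVec_mulVec, hcross, Matrix.zero_mulVec,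
            dotProduct_zero]
        have hcr2 : (C'ᵀ *ᵥ u) ⬝ᵥ (W'ᵀ *ᵥ u) = 0 := by rw [dotProduct_comm]; exact hcr
        rw [hsplit]
        rw [dotProduct_add, add_dotProduct, add_dotProduct, dotProduct_smul, smul_dotProduct,
          smul_dotProduct, dotProduct_smul, hcr, hcr2]
        have hfrob := frob_bound C'ᵀ u
        rw [hfrobT] at hfrob
        have hWu := hW'row u
        simp only [smul_eq_mul, mul_zero, add_zero, zero_add]
        nlinarith [hfrob, hWu, dot_self_nonneg u]
      have huv : u ⬝ᵥ ((W' + s • C') *ᵥ v) = ((W' + s • C')ᵀ *ᵥ u) ⬝ᵥ v := by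
        rw [mulVec_dot, transpose_transpose, dotProduct_comm]
      rw [huv]
      have hcs := dot_sq_le ((W' + s • C')ᵀ *ᵥ u) v
      have hvnn : 0 ≤ v ⬝ᵥ v := dot_self_nonneg v
      nlinarith [hYu, hcs, hvnn]
    have ht0 := perturb_zero A W' C' htrW hcontr
    apply eq_zero_of_trace_transpose_mul_self
    have e : Matrix.trace (C'ᵀ * C') = Matrix.trace (C'ᵀ * A) := by
      rw [hC't, hC']
      calc Matrix.trace ((1 - Q) * Aᵀ * (A * (1 - Q)))
          = Matrix.trace ((1 - Q) * Aᵀ * A * (1 - Q)) := by simp only [Matrix.mul_assoc]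
        _ = Matrix.trace ((1 - Q) * ((1 - Q) * Aᵀ * A)) := by
            rw [Matrix.trace_mul_comm ((1 - Q) * Aᵀ * A) (1 - Q)]
        _ = Matrix.trace ((1 - Q) * (1 - Q) * Aᵀ * A) := by simp only [Matrix.mul_assoc]
        _ = Matrix.trace ((1 - Q) * Aᵀ * A) := by rw [h1Q]
        _ = Matrix.trace ((1 - Q) * Aᵀ * A) := rfl
    rw [e, ht0]
  have hQA : Q * A = A := by
    have := hL
    rw [Matrix.sub_mul, Matrix.one_mul, sub_eq_zero] at this
    exact this.symm
  have hAQ : A * Q = A := by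
    have := hR
    rw [Matrix.mul_sub, Matrix.mul_one, sub_eq_zero] at this
    exact this.symm
  rw [hQA, hAQ]


end Stmt12Aux

/-- Every optimal solution `Z*` of `min_Z ‖Z‖_* + ‖X (I − Z) X†‖_*` satisfies
`Z* = V_X (V_Xᵀ Z* V_X) V_Xᵀ`, i.e. `V_X V_Xᵀ Z* V_X V_Xᵀ = Z*`. -/
theorem stmt12 {m n r : ℕ} (X : Matrix (Fin m) (Fin n) ℝ) (hX : X ≠ 0)
    (P : Matrix (Fin n) (Fin m) ℝ) (hP : IsMoorePenroseInv X P)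
    (UX : Matrix (Fin m) (Fin r) ℝ) (σX : Fin r → ℝ) (VX : Matrix (Fin n) (Fin r) ℝ)
    (hsvd : IsSkinnySVD X UX σX VX)
    (Zs : Matrix (Fin n) (Fin n) ℝ)
    (hopt : ∀ Z : Matrix (Fin n) (Fin n) ℝ,
      nuclearNorm Zs + nuclearNorm (X * (1 - Zs) * P)
        ≤ nuclearNorm Z + nuclearNorm (X * (1 - Z) * P)) :
    Zs = VX * (VXᵀ * Zs * VX) * VXᵀ := by
  obtain ⟨hUU, hVV, hσ, hXsvd, hrank⟩ := hsvd
  obtain ⟨hXPX, hPXP, hXPt, hPXt⟩ := hP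
  set Q : Matrix (Fin n) (Fin n) ℝ := VX * VXᵀ with hQ
  have hQt : Qᵀ = Q := by rw [hQ, transpose_mul, transpose_transpose]
  have hQi : Q * Q = Q := by
    rw [hQ]
    calc VX * VXᵀ * (VX * VXᵀ) = VX * (VXᵀ * VX) * VXᵀ := by simp only [Matrix.mul_assoc]
      _ = VX * VXᵀ := by rw [hVV, Matrix.mul_one]
  have hXQ : X * Q = X := by
    rw [hQ, hXsvd]
    calc UX * Matrix.diagonal σX * VXᵀ * (VX * VXᵀ)
        = UX * Matrix.diagonal σX * ((VXᵀ * VX) * VXᵀ) := by simp only [Matrix.mul_assoc]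
      _ = UX * Matrix.diagonal σX * VXᵀ := by rw [hVV, Matrix.one_mul]
  have hQXt : Q * Xᵀ = Xᵀ := by
    rw [hQ, hXsvd, transpose_mul, transpose_mul, transpose_transpose]
    calc VX * VXᵀ * (VX * ((Matrix.diagonal σX)ᵀ * UXᵀ))
        = VX * (VXᵀ * VX) * ((Matrix.diagonal σX)ᵀ * UXᵀ) := by simp only [Matrix.mul_assoc]
      _ = VX * ((Matrix.diagonal σX)ᵀ * UXᵀ) := by rw [hVV, Matrix.mul_one]
  have hQPX : Q * (P * X) = P * X := by
    calc Q * (P * X) = Q * (Xᵀ * Pᵀ) := by rw [← transpose_mul, hPXt]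
      _ = Q * Xᵀ * Pᵀ := by simp only [Matrix.mul_assoc]
      _ = Xᵀ * Pᵀ := by rw [hQXt]
      _ = (P * X)ᵀ := by rw [transpose_mul]
      _ = P * X := hPXt
  have hQP : Q * P = P := by
    calc Q * P = Q * (P * X * P) := by rw [hPXP]
      _ = Q * (P * X) * P := by simp only [Matrix.mul_assoc]
      _ = P * X * P := by rw [hQPX]
      _ = P := hPXP
  have hXZ : X * (1 - Q * Zs * Q) * P = X * (1 - Zs) * P := by
    have e : X * (Q * Zs * Q) * P = X * Zs * P := by
      calc X * (Q * Zs * Q) * P = X * Q * Zs * (Q * P) := by simp only [Matrix.mul_assoc]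
        _ = X * Q * Zs * P := by rw [hQP]
        _ = X * Zs * P := by rw [hXQ]
    rw [Matrix.mul_sub, Matrix.mul_one, Matrix.sub_mul, e, Matrix.mul_sub, Matrix.mul_one,
      Matrix.sub_mul]
  have hB := hopt (Q * Zs * Q)
  rw [hXZ] at hB
  have hNle : nuclearNorm Zs ≤ nuclearNorm (Q * Zs * Q) := by linarith
  have hfin := Stmt12Aux.lemF Q Zs hQt hQi hNle
  calc Zs = Q * Zs * Q := hfin
    _ = VX * (VXᵀ * Zs * VX) * VXᵀ := by rw [hQ]; simp only [Matrix.mul_assoc]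
end

section
/- The set of optimal solutions (Z*, L*) to the heuristic LatLRR problem (minimize ‖Z‖_* + ‖L‖_* subject to X = X Z + L X) is exactly the set of pairs Z* = V_X Ŵ V_Xᵀ and L* = U_X (I − Ŵ) U_Xᵀ, where Ŵ ranges over all matrices of size rank(X) satisfying: (1) Ŵ is block diagonal compatibly with Σ_X, i.e., [Ŵ]_{ij} = 0 whenever [Σ_X]_{ii} ≠ [Σ_X]_{jj}; and (2) both Ŵ and I − Ŵ are symmetric positive semi-definite. -/
open Matrix

set_option linter.unusedSectionVars false
set_option linter.unusedVariables false

namespace LatLRRAux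

/-- squared euclidean norm of a finite real vector -/
def sqn {ι : Type*} [Fintype ι] (x : ι → ℝ) : ℝ := ∑ k, x k ^ 2

lemma sqn_nonneg {ι : Type*} [Fintype ι] (x : ι → ℝ) : 0 ≤ sqn x :=
  Finset.sum_nonneg fun _ _ => sq_nonneg _

lemma sqn_eq_dot {ι : Type*} [Fintype ι] (x : ι → ℝ) : sqn x = x ⬝ᵥ x := by
  simp [sqn, dotProduct, sq]

lemma dot_le_sqrt {ι : Type*} [Fintype ι] (x y : ι → ℝ) :
    x ⬝ᵥ y ≤ Real.sqrt (sqn x) * Real.sqrt (sqn y) :=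
  Real.sum_mul_le_sqrt_mul_sqrt _ _ _

/-- `B` is a (weak) contraction. -/
def Contraction {m n : Type*} [Fintype m] [Fintype n] (B : Matrix m n ℝ) : Prop :=
  ∀ x : n → ℝ, sqn (B *ᵥ x) ≤ sqn x

variable {n : Type*} [Fintype n] [DecidableEq n]

lemma herm_tmul (A : Matrix n n ℝ) : (Aᵀ * A).IsHermitian := by
  simpa [Matrix.conjTranspose_eq_transpose_of_trivial] using
    Matrix.isHermitian_conjTranspose_mul_self A

lemma herm_real {A : Matrix n n ℝ} (h : A.IsHermitian) : Aᵀ = A := by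
  rw [← Matrix.conjTranspose_eq_transpose_of_trivial]; exact h

lemma psd_transpose_mul_self {m : Type*} [Fintype m] (B : Matrix m n ℝ) :
    (Bᵀ * B).PosSemidef := by
  rw [← Matrix.conjTranspose_eq_transpose_of_trivial]
  exact Matrix.posSemidef_conjTranspose_mul_self B

lemma psd_conj {r : Type*} [Fintype r] [DecidableEq r] {A : Matrix r r ℝ} (hA : A.PosSemidef)
    (B : Matrix n r ℝ) : (B * A * Bᵀ).PosSemidef := by
  rw [← Matrix.conjTranspose_eq_transpose_of_trivial]
  exact hA.mul_mul_conjTranspose_same B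

lemma sqn_mulVec {m : Type*} [Fintype m] (B : Matrix m n ℝ) (x : n → ℝ) :
    sqn (B *ᵥ x) = x ⬝ᵥ ((Bᵀ * B) *ᵥ x) := by
  rw [sqn_eq_dot, ← Matrix.mulVec_mulVec, Matrix.mulVec_transpose, Matrix.dotProduct_mulVec,
    dotProduct_comm]

lemma contraction_of_psd {m : Type*} [Fintype m] {B : Matrix m n ℝ}
    (h : (1 - Bᵀ * B).PosSemidef) : Contraction B := by
  intro x
  have h2 := h.dotProduct_mulVec_nonneg x
  simp only [star_trivial] at h2
  have h3 : x ⬝ᵥ ((1 - Bᵀ * B) *ᵥ x) = sqn x - sqn (B *ᵥ x) := by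
    rw [Matrix.sub_mulVec, dotProduct_sub, Matrix.one_mulVec, ← sqn_eq_dot, sqn_mulVec]
  linarith [h2, h3.symm ▸ h2]

lemma sqn_col {m : Type*} [Fintype m] (A : Matrix m n ℝ) (i : n) :
    sqn (fun k => A k i) = (Aᵀ * A) i i := by
  simp [sqn, Matrix.mul_apply, sq]

lemma col_mul {a b c : Type*} [Fintype a] [Fintype b] (M : Matrix a b ℝ) (N : Matrix b c ℝ)
    (j : c) : (fun k => (M * N) k j) = M *ᵥ (fun l => N l j) := by
  ext k; simp [Matrix.mul_apply, Matrix.mulVec, dotProduct]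

lemma trace_transpose_mul_eq_sum_cols {a b : Type*} [Fintype a] [Fintype b]
    (A B : Matrix a b ℝ) :
    Matrix.trace (Aᵀ * B) = ∑ j, (fun k => A k j) ⬝ᵥ (fun k => B k j) := by
  simp [Matrix.trace, Matrix.mul_apply, dotProduct, Matrix.diag]

lemma exists_spectral (Z : Matrix n n ℝ) :
    ∃ Q : Matrix n n ℝ, Qᵀ * Q = 1 ∧ Q * Qᵀ = 1 ∧
      Zᵀ * Z = Q * diagonal ((herm_tmul Z).eigenvalues) * Qᵀ := by
  set H := herm_tmul Z with hH
  refine ⟨(H.eigenvectorUnitary : Matrix n n ℝ), ?_, ?_, ?_⟩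
  · rw [← Matrix.conjTranspose_eq_transpose_of_trivial]
    exact Matrix.mem_unitaryGroup_iff'.mp H.eigenvectorUnitary.2
  · rw [← Matrix.conjTranspose_eq_transpose_of_trivial (H.eigenvectorUnitary : Matrix n n ℝ)]
    exact Matrix.mem_unitaryGroup_iff.mp H.eigenvectorUnitary.2
  · have h := H.spectral_theorem
    simp only [Unitary.conjStarAlgAut_apply, RCLike.ofReal_real_eq_id, Function.comp_def, id_eq,
      Matrix.star_eq_conjTranspose, Matrix.conjTranspose_eq_transpose_of_trivial] at h
    simpa using h

lemma eig_nonneg (Z : Matrix n n ℝ) (i : n) :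
    0 ≤ (herm_tmul Z).eigenvalues i :=
  Matrix.eigenvalues_conjTranspose_mul_self_nonneg Z i

lemma trace_shift (Z B Q : Matrix n n ℝ) (hQ2 : Q * Qᵀ = 1) :
    Matrix.trace (Bᵀ * Z) = Matrix.trace ((B * Q)ᵀ * (Z * Q)) := by
  have h : (B * Q)ᵀ * (Z * Q) = Qᵀ * ((Bᵀ * Z) * Q) := by
    simp [Matrix.transpose_mul, Matrix.mul_assoc]
  rw [h, Matrix.trace_mul_comm Qᵀ (Bᵀ * Z * Q), Matrix.mul_assoc (Bᵀ * Z) Q Qᵀ, hQ2,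
    Matrix.mul_one]

lemma col_sq_eq (Z Q : Matrix n n ℝ) (μ : n → ℝ) (hQ1 : Qᵀ * Q = 1)
    (hspec : Zᵀ * Z = Q * diagonal μ * Qᵀ) (i : n) :
    sqn (fun k => (Z * Q) k i) = μ i := by
  rw [sqn_col]
  have h : (Z * Q)ᵀ * (Z * Q) = diagonal μ := by
    calc (Z * Q)ᵀ * (Z * Q) = Qᵀ * (Zᵀ * Z) * Q := by
          simp [Matrix.transpose_mul, Matrix.mul_assoc]
      _ = (Qᵀ * Q) * diagonal μ * (Qᵀ * Q) := by rw [hspec]; simp [Matrix.mul_assoc]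
      _ = diagonal μ := by rw [hQ1]; simp
  rw [h, Matrix.diagonal_apply_eq]

lemma col_contr_le (B : Matrix n n ℝ) (Q : Matrix n n ℝ) (hB : Contraction B)
    (hQ1 : Qᵀ * Q = 1) (i : n) : sqn (fun k => (B * Q) k i) ≤ 1 := by
  rw [col_mul]
  calc sqn (B *ᵥ fun l => Q l i) ≤ sqn (fun l => Q l i) := hB _
    _ = (Qᵀ * Q) i i := sqn_col Q i
    _ = 1 := by rw [hQ1, Matrix.one_apply_eq]

lemma term_le (Z B Q : Matrix n n ℝ) (μ : n → ℝ) (hμ : ∀ i, 0 ≤ μ i) (hB : Contraction B)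
    (hQ1 : Qᵀ * Q = 1) (hspec : Zᵀ * Z = Q * diagonal μ * Qᵀ) (i : n) :
    (fun k => (B * Q) k i) ⬝ᵥ (fun k => (Z * Q) k i) ≤ Real.sqrt (μ i) := by
  calc (fun k => (B * Q) k i) ⬝ᵥ (fun k => (Z * Q) k i)
      ≤ Real.sqrt (sqn fun k => (B * Q) k i) * Real.sqrt (sqn fun k => (Z * Q) k i) :=
        dot_le_sqrt _ _
    _ ≤ 1 * Real.sqrt (μ i) := by
        rw [col_sq_eq Z Q μ hQ1 hspec i]
        refine mul_le_mul_of_nonneg_right ?_ (Real.sqrt_nonneg _)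
        calc Real.sqrt (sqn fun k => (B * Q) k i) ≤ Real.sqrt 1 :=
              Real.sqrt_le_sqrt (col_contr_le B Q hB hQ1 i)
          _ = 1 := Real.sqrt_one
    _ = Real.sqrt (μ i) := one_mul _

lemma trace_mul_le_nuclear (Z B : Matrix n n ℝ) (hB : Contraction B) :
    Matrix.trace (Bᵀ * Z) ≤ nuclearNorm Z := by
  obtain ⟨Q, hQ1, hQ2, hspec⟩ := exists_spectral Z
  rw [trace_shift Z B Q hQ2, trace_transpose_mul_eq_sum_cols]
  exact Finset.sum_le_sum fun i _ =>
    term_le Z B Q _ (eig_nonneg Z) hB hQ1 hspec i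

lemma eq_case (Z B : Matrix n n ℝ) (hB : Contraction B)
    (h : Matrix.trace (Bᵀ * Z) = nuclearNorm Z) :
    ∃ Q : Matrix n n ℝ, Qᵀ * Q = 1 ∧ Q * Qᵀ = 1 ∧
      ∃ c : n → ℝ, (∀ i, 0 ≤ c i) ∧ Z * Q = B * Q * diagonal c := by
  obtain ⟨Q, hQ1, hQ2, hspec⟩ := exists_spectral Z
  set μ := (herm_tmul Z).eigenvalues with hμdef
  have hμ : ∀ i, 0 ≤ μ i := eig_nonneg Z
  refine ⟨Q, hQ1, hQ2, fun i => Real.sqrt (μ i), fun i => Real.sqrt_nonneg _, ?_⟩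
  have hsum : ∑ i, (fun k => (B * Q) k i) ⬝ᵥ (fun k => (Z * Q) k i)
      = ∑ i, Real.sqrt (μ i) := by
    rw [← trace_transpose_mul_eq_sum_cols, ← trace_shift Z B Q hQ2, h]; rfl
  have hterm := (Finset.sum_eq_sum_iff_of_le
      (fun i (_ : i ∈ Finset.univ) => term_le Z B Q μ hμ hB hQ1 hspec i)).mp hsum
  ext k i
  set u : n → ℝ := fun l => (Z * Q) l i with hu
  set v : n → ℝ := fun l => (B * Q) l i with hv
  set c : ℝ := Real.sqrt (μ i) with hc
  have husq : sqn u = c ^ 2 := by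
    rw [col_sq_eq Z Q μ hQ1 hspec i, hc, Real.sq_sqrt (hμ i)]
  have hvsq : sqn v ≤ 1 := col_contr_le B Q hB hQ1 i
  have hdot : ∑ l, v l * u l = c := hterm i (Finset.mem_univ i)
  have hzero : ∑ l, (u l - c * v l) ^ 2 ≤ 0 := by
    have expand : ∀ l, (u l - c * v l) ^ 2
        = u l ^ 2 - 2 * c * (v l * u l) + c ^ 2 * v l ^ 2 := fun l => by ring
    rw [Finset.sum_congr rfl fun l _ => expand l]
    rw [Finset.sum_add_distrib, Finset.sum_sub_distrib, ← Finset.mul_sum, ← Finset.mul_sum]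
    have : (∑ l, u l ^ 2) = c ^ 2 := husq
    rw [this, hdot]
    have hvsq2 : ∑ l, v l ^ 2 ≤ 1 := hvsq
    nlinarith [mul_nonneg (sq_nonneg c) (sub_nonneg.mpr hvsq2)]
  have hall : ∀ l, u l - c * v l = 0 := by
    intro l
    have h0 : ∑ l, (u l - c * v l) ^ 2 = 0 :=
      le_antisymm hzero (Finset.sum_nonneg fun _ _ => sq_nonneg _)
    have := (Finset.sum_eq_zero_iff_of_nonneg fun l _ => sq_nonneg ((u l - c * v l))).mp h0
      l (Finset.mem_univ l)
    exact (pow_eq_zero_iff two_ne_zero).mp this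
  have : u k = c * v k := by have := hall k; linarith
  calc (Z * Q) k i = u k := rfl
    _ = c * v k := this
    _ = (B * Q) k i * c := by rw [hv]; ring
    _ = (B * Q * diagonal fun i => Real.sqrt (μ i)) k i := by
        rw [Matrix.mul_diagonal]

lemma exists_contraction_trace_eq (Z : Matrix n n ℝ) :
    ∃ B : Matrix n n ℝ, Contraction B ∧ Matrix.trace (Bᵀ * Z) = nuclearNorm Z := by
  obtain ⟨Q, hQ1, hQ2, hspec⟩ := exists_spectral Z
  set μ := (herm_tmul Z).eigenvalues with hμdef
  have hμ : ∀ i, 0 ≤ μ i := eig_nonneg Z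
  set dp : n → ℝ := fun i => if μ i = 0 then 0 else (Real.sqrt (μ i))⁻¹ with hdp
  refine ⟨Z * Q * diagonal dp * Qᵀ, ?_, ?_⟩
  · apply contraction_of_psd
    have hBt : (Z * Q * diagonal dp * Qᵀ)ᵀ = Q * diagonal dp * Qᵀ * Zᵀ := by
      simp [Matrix.transpose_mul, Matrix.diagonal_transpose, Matrix.mul_assoc]
    have hBtB : (Z * Q * diagonal dp * Qᵀ)ᵀ * (Z * Q * diagonal dp * Qᵀ)
        = Q * diagonal (fun i => dp i * μ i * dp i) * Qᵀ := by
      rw [hBt]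
      calc Q * diagonal dp * Qᵀ * Zᵀ * (Z * Q * diagonal dp * Qᵀ)
          = Q * diagonal dp * ((Qᵀ * (Zᵀ * Z)) * Q) * diagonal dp * Qᵀ := by
            simp only [Matrix.mul_assoc]
        _ = Q * diagonal dp * ((Qᵀ * Q) * diagonal μ * (Qᵀ * Q)) * diagonal dp * Qᵀ := by
            rw [hspec]; simp only [Matrix.mul_assoc]
        _ = Q * (diagonal dp * diagonal μ * diagonal dp) * Qᵀ := by
            rw [hQ1]; simp [Matrix.mul_assoc]
        _ = Q * diagonal (fun i => dp i * μ i * dp i) * Qᵀ := by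
            rw [Matrix.diagonal_mul_diagonal, Matrix.diagonal_mul_diagonal]
    rw [hBtB]
    have h1 : (1 : Matrix n n ℝ) = Q * diagonal (fun _ => (1:ℝ)) * Qᵀ := by
      simp [hQ2]
    rw [h1, ← Matrix.sub_mul, ← Matrix.mul_sub, Matrix.diagonal_sub]
    apply psd_conj
    apply Matrix.PosSemidef.diagonal
    intro i
    by_cases h0 : μ i = 0
    · simp [hdp, h0]
    · have hpos : 0 < μ i := lt_of_le_of_ne (hμ i) (Ne.symm h0)
      have hs : Real.sqrt (μ i) * Real.sqrt (μ i) = μ i := Real.mul_self_sqrt (hμ i)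
      have hsne : Real.sqrt (μ i) ≠ 0 := by positivity
      have : dp i * μ i * dp i = 1 := by
        simp only [hdp, if_neg h0]
        field_simp
        rw [Real.sq_sqrt (hμ i)]
      simp [this]
  · have hBtZ : (Z * Q * diagonal dp * Qᵀ)ᵀ * Z
        = Q * diagonal dp * Qᵀ * (Zᵀ * Z) := by
      simp [Matrix.transpose_mul, Matrix.diagonal_transpose, Matrix.mul_assoc]
    rw [hBtZ, hspec]
    have : Q * diagonal dp * Qᵀ * (Q * diagonal μ * Qᵀ)
        = Q * diagonal (fun i => dp i * μ i) * Qᵀ := by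
      calc Q * diagonal dp * Qᵀ * (Q * diagonal μ * Qᵀ)
          = Q * diagonal dp * (Qᵀ * Q) * diagonal μ * Qᵀ := by simp only [Matrix.mul_assoc]
        _ = Q * (diagonal dp * diagonal μ) * Qᵀ := by rw [hQ1]; simp [Matrix.mul_assoc]
        _ = Q * diagonal (fun i => dp i * μ i) * Qᵀ := by rw [Matrix.diagonal_mul_diagonal]
    rw [this, Matrix.trace_mul_comm, ← Matrix.mul_assoc, hQ1, Matrix.one_mul,
      Matrix.trace_diagonal]
    apply Finset.sum_congr rfl
    intro i _
    show dp i * μ i = Real.sqrt (μ i)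
    by_cases h0 : μ i = 0
    · simp [hdp, h0]
    · have hpos : 0 < μ i := lt_of_le_of_ne (hμ i) (Ne.symm h0)
      simp only [hdp, if_neg h0]
      rw [inv_mul_eq_div, eq_comm, eq_div_iff (by positivity), Real.mul_self_sqrt (hμ i)]

lemma contraction_one : Contraction (1 : Matrix n n ℝ) := fun x => by
  simp [Matrix.one_mulVec]

lemma trace_le_nuclear (Z : Matrix n n ℝ) : Matrix.trace Z ≤ nuclearNorm Z := by
  have := trace_mul_le_nuclear Z 1 contraction_one
  simpa using this

lemma sqrt_ineq {a b : ℝ} (ha : 0 ≤ a) (hb : 0 ≤ b)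
    (h : a ≤ Real.sqrt b * Real.sqrt a) : a ≤ b := by
  by_cases h0 : a = 0
  · rw [h0]; exact hb
  · have hapos : 0 < a := lt_of_le_of_ne ha (Ne.symm h0)
    have hsa : 0 < Real.sqrt a := Real.sqrt_pos.mpr hapos
    have h1 : Real.sqrt a * Real.sqrt a ≤ Real.sqrt b * Real.sqrt a := by
      rw [Real.mul_self_sqrt ha]; exact h
    have h2 : Real.sqrt a ≤ Real.sqrt b := le_of_mul_le_mul_right h1 hsa
    calc a = Real.sqrt a * Real.sqrt a := (Real.mul_self_sqrt ha).symm
      _ ≤ Real.sqrt b * Real.sqrt b := by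
          apply mul_le_mul h2 h2 hsa.le (Real.sqrt_nonneg b)
      _ = b := Real.mul_self_sqrt hb

lemma contraction_transpose {B : Matrix n n ℝ} (hB : Contraction B) : Contraction Bᵀ := by
  intro x
  set y := Bᵀ *ᵥ x with hy
  have h1 : sqn y = x ⬝ᵥ (B *ᵥ y) := by
    rw [sqn_eq_dot, Matrix.dotProduct_mulVec x B y, ← Matrix.mulVec_transpose]
  have h2 : x ⬝ᵥ (B *ᵥ y) ≤ Real.sqrt (sqn x) * Real.sqrt (sqn (B *ᵥ y)) := dot_le_sqrt _ _
  have h3 : Real.sqrt (sqn (B *ᵥ y)) ≤ Real.sqrt (sqn y) := Real.sqrt_le_sqrt (hB y)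
  apply sqrt_ineq (sqn_nonneg y) (sqn_nonneg x)
  calc sqn y ≤ Real.sqrt (sqn x) * Real.sqrt (sqn (B *ᵥ y)) := h1 ▸ h2
    _ ≤ Real.sqrt (sqn x) * Real.sqrt (sqn y) :=
        mul_le_mul_of_nonneg_left h3 (Real.sqrt_nonneg _)

lemma nuclearNorm_transpose (Z : Matrix n n ℝ) : nuclearNorm Zᵀ = nuclearNorm Z := by
  have key : ∀ Y : Matrix n n ℝ, nuclearNorm Yᵀ ≤ nuclearNorm Y := by
    intro Y
    obtain ⟨B, hB, hBe⟩ := exists_contraction_trace_eq Yᵀ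
    rw [← hBe]
    have h : Matrix.trace (Bᵀ * Yᵀ) = Matrix.trace ((Bᵀ)ᵀ * Y) := by
      calc Matrix.trace (Bᵀ * Yᵀ) = Matrix.trace ((Y * B)ᵀ) := by rw [Matrix.transpose_mul]
        _ = Matrix.trace (Y * B) := Matrix.trace_transpose _
        _ = Matrix.trace (B * Y) := Matrix.trace_mul_comm _ _
        _ = Matrix.trace ((Bᵀ)ᵀ * Y) := by rw [Matrix.transpose_transpose]
    rw [h]
    exact trace_mul_le_nuclear Y Bᵀ (contraction_transpose hB)
  refine le_antisymm (key Z) ?_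
  have := key Zᵀ
  rwa [Matrix.transpose_transpose] at this

lemma nuclearNorm_psd {Z : Matrix n n ℝ} (hZ : Z.PosSemidef) :
    nuclearNorm Z = Matrix.trace Z := by
  refine le_antisymm ?_ (trace_le_nuclear Z)
  obtain ⟨B, hB, hBe⟩ := exists_contraction_trace_eq Z
  rw [← hBe]
  obtain ⟨S, hSsym, hSS⟩ : ∃ S : Matrix n n ℝ, Sᵀ = S ∧ S * S = Z :=
    open scoped MatrixOrder in
    ⟨CFC.sqrt Z, herm_real (CFC.sqrt_nonneg Z).posSemidef.1, CFC.sqrt_mul_sqrt_self Z hZ.nonneg⟩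
  have h1 : Bᵀ * Z = Bᵀ * S * S := by rw [Matrix.mul_assoc, hSS]
  rw [h1, Matrix.trace_mul_comm]
  have h2 : Matrix.trace (S * (Bᵀ * S)) = ∑ i, (fun k => S k i) ⬝ᵥ (fun k => (Bᵀ * S) k i) := by
    have h := trace_transpose_mul_eq_sum_cols S (Bᵀ * S)
    rw [hSsym] at h
    exact h
  rw [h2]
  have h3 : ∀ i, (fun k => S k i) ⬝ᵥ (fun k => (Bᵀ * S) k i) ≤ Z i i := by
    intro i
    have e1 : (fun k => (Bᵀ * S) k i) = Bᵀ *ᵥ (fun k => S k i) := col_mul Bᵀ S i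
    rw [e1]
    calc (fun k => S k i) ⬝ᵥ (Bᵀ *ᵥ fun k => S k i)
        ≤ Real.sqrt (sqn fun k => S k i) * Real.sqrt (sqn (Bᵀ *ᵥ fun k => S k i)) :=
          dot_le_sqrt _ _
      _ ≤ Real.sqrt (sqn fun k => S k i) * Real.sqrt (sqn fun k => S k i) :=
          mul_le_mul_of_nonneg_left
            (Real.sqrt_le_sqrt (contraction_transpose hB _)) (Real.sqrt_nonneg _)
      _ = sqn fun k => S k i := Real.mul_self_sqrt (sqn_nonneg _)
      _ = (Sᵀ * S) i i := sqn_col S i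
      _ = Z i i := by rw [hSsym, hSS]
  calc ∑ i, (fun k => S k i) ⬝ᵥ (fun k => (Bᵀ * S) k i) ≤ ∑ i, Z i i :=
        Finset.sum_le_sum fun i _ => h3 i
    _ = Matrix.trace Z := rfl

lemma psd_of_trace_eq_nuclear {Z : Matrix n n ℝ} (h : Matrix.trace Z = nuclearNorm Z) :
    Z.PosSemidef := by
  have h1 : Matrix.trace ((1 : Matrix n n ℝ)ᵀ * Z) = nuclearNorm Z := by simpa using h
  obtain ⟨Q, hQ1, hQ2, c, hc, hZQ⟩ := eq_case Z 1 contraction_one h1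
  have hZ : Z = Q * diagonal c * Qᵀ := by
    have h2 : Z * Q * Qᵀ = Q * diagonal c * Qᵀ := by rw [hZQ]; simp
    rw [Matrix.mul_assoc, hQ2, Matrix.mul_one] at h2
    exact h2
  rw [hZ]; exact psd_conj (Matrix.PosSemidef.diagonal hc) Q

lemma proj_psd_compl {P : Matrix n n ℝ} (hPsym : Pᵀ = P) (hPidem : P * P = P) :
    (1 - P).PosSemidef := by
  have e : (1 - P) = (1 - P)ᵀ * (1 - P) := by
    rw [Matrix.transpose_sub, Matrix.transpose_one, hPsym]
    have h2 : (1 - P) * (1 - P) = 1 - P - P + P * P := by noncomm_ring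
    rw [h2, hPidem]
    abel
  rw [e]; exact psd_transpose_mul_self _

lemma proj_eq_of_trace_eq {Z P : Matrix n n ℝ} (hPsym : Pᵀ = P) (hPidem : P * P = P)
    (h : Matrix.trace (P * Z) = nuclearNorm Z) : P * Z = Z := by
  have hcontr : Contraction P := by
    apply contraction_of_psd
    rw [hPsym, hPidem]
    exact proj_psd_compl hPsym hPidem
  have h1 : Matrix.trace (Pᵀ * Z) = nuclearNorm Z := by rw [hPsym]; exact h
  obtain ⟨Q, hQ1, hQ2, c, hc, hZQ⟩ := eq_case Z P hcontr h1
  have h2 : P * (Z * Q) = Z * Q := by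
    rw [hZQ, ← Matrix.mul_assoc, ← Matrix.mul_assoc, hPidem]
  have h3 := congrArg (fun M => M * Qᵀ) h2
  simp only [Matrix.mul_assoc] at h3
  rw [hQ2] at h3
  simpa using h3

lemma nuclear_compression {r : Type*} [Fintype r] [DecidableEq r] (V : Matrix n r ℝ)
    (hV : Vᵀ * V = 1) (Z : Matrix n n ℝ) : nuclearNorm (Vᵀ * Z * V) ≤ nuclearNorm Z := by
  obtain ⟨B, hB, hBe⟩ := exists_contraction_trace_eq (Vᵀ * Z * V)
  rw [← hBe]
  have hVVt : (V * Vᵀ)ᵀ = V * Vᵀ := by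
    rw [Matrix.transpose_mul, Matrix.transpose_transpose]
  have hVVi : (V * Vᵀ) * (V * Vᵀ) = V * Vᵀ := by
    calc (V * Vᵀ) * (V * Vᵀ) = V * (Vᵀ * V) * Vᵀ := by simp only [Matrix.mul_assoc]
      _ = V * Vᵀ := by rw [hV]; simp [Matrix.mul_assoc]
  have hcontr : Contraction (V * B * Vᵀ) := by
    intro x
    have e1 : (V * B * Vᵀ) *ᵥ x = V *ᵥ (B *ᵥ (Vᵀ *ᵥ x)) := by
      rw [Matrix.mulVec_mulVec, Matrix.mulVec_mulVec]
    rw [e1]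
    have e2 : sqn (V *ᵥ (B *ᵥ (Vᵀ *ᵥ x))) = sqn (B *ᵥ (Vᵀ *ᵥ x)) := by
      rw [sqn_mulVec, hV, Matrix.one_mulVec, ← sqn_eq_dot]
    rw [e2]
    have e3 : sqn (B *ᵥ (Vᵀ *ᵥ x)) ≤ sqn (Vᵀ *ᵥ x) := hB _
    have e4 : sqn (Vᵀ *ᵥ x) ≤ sqn x := by
      have : Contraction Vᵀ := by
        apply contraction_of_psd
        rw [Matrix.transpose_transpose]
        exact proj_psd_compl hVVt hVVi
      exact this x
    linarith
  have htr : Matrix.trace (Bᵀ * (Vᵀ * Z * V)) = Matrix.trace ((V * B * Vᵀ)ᵀ * Z) := by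
    calc Matrix.trace (Bᵀ * (Vᵀ * Z * V)) = Matrix.trace ((Bᵀ * Vᵀ * Z) * V) := by
          simp only [Matrix.mul_assoc]
      _ = Matrix.trace (V * (Bᵀ * Vᵀ * Z)) := (Matrix.trace_mul_comm _ _).symm
      _ = Matrix.trace ((V * B * Vᵀ)ᵀ * Z) := by
          simp only [Matrix.transpose_mul, Matrix.transpose_transpose, Matrix.mul_assoc]
  rw [htr]
  exact trace_mul_le_nuclear Z (V * B * Vᵀ) hcontr

end LatLRRAux

open LatLRRAux

/-- Complete solutions to the heuristic LatLRR problem: `(Z, L)` is optimal iff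
`Z = V_X Ŵ V_Xᵀ` and `L = U_X (I − Ŵ) U_Xᵀ` where `Ŵ` is block diagonal compatibly
with `Σ_X` and both `Ŵ` and `I − Ŵ` are symmetric positive semi-definite. -/
theorem stmt14 {m n r : ℕ} (X : Matrix (Fin m) (Fin n) ℝ) (hX : X ≠ 0)
    (UX : Matrix (Fin m) (Fin r) ℝ) (σX : Fin r → ℝ) (VX : Matrix (Fin n) (Fin r) ℝ)
    (hsvd : IsSkinnySVD X UX σX VX)
    (Z : Matrix (Fin n) (Fin n) ℝ) (L : Matrix (Fin m) (Fin m) ℝ) :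
    (X = X * Z + L * X ∧
      ∀ (Z' : Matrix (Fin n) (Fin n) ℝ) (L' : Matrix (Fin m) (Fin m) ℝ),
        X = X * Z' + L' * X →
          nuclearNorm Z + nuclearNorm L ≤ nuclearNorm Z' + nuclearNorm L')
    ↔ ∃ W : Matrix (Fin r) (Fin r) ℝ,
        (∀ i j, σX i ≠ σX j → W i j = 0) ∧
        W.PosSemidef ∧ (1 - W).PosSemidef ∧
        Z = VX * W * VXᵀ ∧ L = UX * (1 - W) * UXᵀ := by
  obtain ⟨hU, hV, hσ, hXd, hr⟩ := hsvd
  set D : Matrix (Fin r) (Fin r) ℝ := Matrix.diagonal σX with hD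
  set Dinv : Matrix (Fin r) (Fin r) ℝ := Matrix.diagonal (fun i => (σX i)⁻¹) with hDinv
  have hσne : ∀ i, σX i ≠ 0 := fun i => (hσ i).ne'
  have hDDinv : D * Dinv = 1 := by
    rw [hD, hDinv, Matrix.diagonal_mul_diagonal]
    have he : (fun i => σX i * (σX i)⁻¹) = fun _ => (1 : ℝ) :=
      funext fun i => mul_inv_cancel₀ (hσne i)
    rw [he, Matrix.diagonal_one]
  have hDinvD : Dinv * D = 1 := by
    rw [hD, hDinv, Matrix.diagonal_mul_diagonal]
    have he : (fun i => (σX i)⁻¹ * σX i) = fun _ => (1 : ℝ) :=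
      funext fun i => inv_mul_cancel₀ (hσne i)
    rw [he, Matrix.diagonal_one]
  have hUX : UXᵀ * X = D * VXᵀ := by
    rw [hXd]
    calc UXᵀ * (UX * D * VXᵀ) = (UXᵀ * UX) * (D * VXᵀ) := by simp only [Matrix.mul_assoc]
      _ = D * VXᵀ := by rw [hU, Matrix.one_mul]
  have hXV : X * VX = UX * D := by
    rw [hXd]
    calc UX * D * VXᵀ * VX = UX * (D * (VXᵀ * VX)) := by simp only [Matrix.mul_assoc]
      _ = UX * D := by rw [hV, Matrix.mul_one]
  -- the compressed constraint
  have hconstr : ∀ (Z' : Matrix (Fin n) (Fin n) ℝ) (L' : Matrix (Fin m) (Fin m) ℝ),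
      X = X * Z' + L' * X →
      D * (VXᵀ * Z' * VX) * Dinv + (UXᵀ * L' * UX) = 1 := by
    intro Z' L' hfeas
    have h0 : UXᵀ * X * VX = UXᵀ * (X * Z' + L' * X) * VX := by rw [← hfeas]
    have hl : UXᵀ * X * VX = D := by
      rw [hUX, Matrix.mul_assoc, hV, Matrix.mul_one]
    have hrr : UXᵀ * (X * Z' + L' * X) * VX
        = D * (VXᵀ * Z' * VX) + (UXᵀ * L' * UX) * D := by
      rw [Matrix.mul_add, Matrix.add_mul]
      congr 1
      · calc UXᵀ * (X * Z') * VX = (UXᵀ * X) * Z' * VX := by simp only [Matrix.mul_assoc]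
          _ = D * (VXᵀ * Z' * VX) := by rw [hUX]; simp only [Matrix.mul_assoc]
      · calc UXᵀ * (L' * X) * VX = UXᵀ * L' * (X * VX) := by simp only [Matrix.mul_assoc]
          _ = (UXᵀ * L' * UX) * D := by rw [hXV]; simp only [Matrix.mul_assoc]
    have h1 : D = D * (VXᵀ * Z' * VX) + (UXᵀ * L' * UX) * D := by
      have hq := h0
      rw [hl, hrr] at hq
      exact hq
    have h2 := congrArg (fun Y => Y * Dinv) h1
    simp only [Matrix.add_mul] at h2
    rw [hDDinv] at h2
    calc D * (VXᵀ * Z' * VX) * Dinv + UXᵀ * L' * UX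
        = D * (VXᵀ * Z' * VX) * Dinv + UXᵀ * L' * UX * (D * Dinv) := by
          rw [hDDinv, Matrix.mul_one]
      _ = D * (VXᵀ * Z' * VX) * Dinv + UXᵀ * L' * UX * D * Dinv := by
          simp only [Matrix.mul_assoc]
      _ = 1 := by rw [← h2]
  -- trace identity for feasible points
  have htrace : ∀ (Z' : Matrix (Fin n) (Fin n) ℝ) (L' : Matrix (Fin m) (Fin m) ℝ),
      X = X * Z' + L' * X →
      Matrix.trace (VXᵀ * Z' * VX) + Matrix.trace (UXᵀ * L' * UX) = (r : ℝ) := by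
    intro Z' L' hfeas
    have h1 := congrArg Matrix.trace (hconstr Z' L' hfeas)
    rw [Matrix.trace_add] at h1
    have h2 : Matrix.trace (D * (VXᵀ * Z' * VX) * Dinv) = Matrix.trace (VXᵀ * Z' * VX) := by
      rw [Matrix.trace_mul_cycle, ← Matrix.mul_assoc, hDinvD, Matrix.one_mul]
    rw [h2, Matrix.trace_one] at h1
    simpa [Fintype.card_fin] using h1
  -- lower bound for all feasible points
  have hlow : ∀ (Z' : Matrix (Fin n) (Fin n) ℝ) (L' : Matrix (Fin m) (Fin m) ℝ),
      X = X * Z' + L' * X → (r : ℝ) ≤ nuclearNorm Z' + nuclearNorm L' := by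
    intro Z' L' hfeas
    have h1 := htrace Z' L' hfeas
    have h2 : Matrix.trace (VXᵀ * Z' * VX) ≤ nuclearNorm Z' :=
      le_trans (trace_le_nuclear _) (nuclear_compression VX hV Z')
    have h3 : Matrix.trace (UXᵀ * L' * UX) ≤ nuclearNorm L' :=
      le_trans (trace_le_nuclear _) (nuclear_compression UX hU L')
    linarith
  -- candidate feasible point with value r
  have hcand : X = X * (VX * VXᵀ) + (0 : Matrix (Fin m) (Fin m) ℝ) * X := by
    rw [Matrix.zero_mul, add_zero, ← Matrix.mul_assoc, hXV]
    exact hXd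
  have hZcval : nuclearNorm (VX * VXᵀ) = (r : ℝ) := by
    have hpsd : (VX * VXᵀ).PosSemidef := by
      have := psd_conj (Matrix.PosSemidef.one (n := Fin r)) VX
      rwa [Matrix.mul_one] at this
    rw [nuclearNorm_psd hpsd, Matrix.trace_mul_comm, hV, Matrix.trace_one]
    simp
  have hLcval : nuclearNorm (0 : Matrix (Fin m) (Fin m) ℝ) = 0 := by
    rw [nuclearNorm_psd Matrix.PosSemidef.zero, Matrix.trace_zero]
  constructor
  · rintro ⟨hfeas, hopt⟩
    have hval_le : nuclearNorm Z + nuclearNorm L ≤ (r : ℝ) := by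
      have := hopt (VX * VXᵀ) 0 hcand
      rw [hZcval, hLcval, add_zero] at this
      exact this
    have hval_ge := hlow Z L hfeas
    set W : Matrix (Fin r) (Fin r) ℝ := VXᵀ * Z * VX with hWdef
    set M : Matrix (Fin r) (Fin r) ℝ := UXᵀ * L * UX with hMdef
    have htrWM : Matrix.trace W + Matrix.trace M = (r : ℝ) := htrace Z L hfeas
    have hZW1 : Matrix.trace W ≤ nuclearNorm W := trace_le_nuclear _
    have hZW2 : nuclearNorm W ≤ nuclearNorm Z := nuclear_compression VX hV Z
    have hLM1 : Matrix.trace M ≤ nuclearNorm M := trace_le_nuclear _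
    have hLM2 : nuclearNorm M ≤ nuclearNorm L := nuclear_compression UX hU L
    have hWeq : Matrix.trace W = nuclearNorm W := by linarith
    have hMeq : Matrix.trace M = nuclearNorm M := by linarith
    have htrWZ : Matrix.trace W = nuclearNorm Z := by linarith
    have htrML : Matrix.trace M = nuclearNorm L := by linarith
    have hWpsd : W.PosSemidef := psd_of_trace_eq_nuclear hWeq
    have hMpsd : M.PosSemidef := psd_of_trace_eq_nuclear hMeq
    have hWsym : Wᵀ = W := herm_real hWpsd.1
    have hMsym : Mᵀ = M := herm_real hMpsd.1
    have hcon := hconstr Z L hfeas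
    have hT : D * W * Dinv = 1 - M := eq_sub_of_add_eq hcon
    have hTsym : (D * W * Dinv)ᵀ = D * W * Dinv := by
      rw [hT, Matrix.transpose_sub, Matrix.transpose_one, hMsym]
    have hTentry : ∀ i j, (D * W * Dinv) i j = σX i * W i j * (σX j)⁻¹ := by
      intro i j
      rw [Matrix.mul_diagonal, Matrix.diagonal_mul]
    have hblock : ∀ i j, σX i ≠ σX j → W i j = 0 := by
      intro i j hne
      have h1 := congrFun (congrFun hTsym i) j
      rw [Matrix.transpose_apply, hTentry i j, hTentry j i] at h1
      have hWji : W j i = W i j := by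
        have := congrFun (congrFun hWsym i) j
        rwa [Matrix.transpose_apply] at this
      rw [hWji] at h1
      -- h1 : σX j * W i j * (σX i)⁻¹ = σX i * W i j * (σX j)⁻¹
      have hi := hσ i
      have hj := hσ j
      have h1' := h1
      field_simp at h1'
      have h4 : (σX j * σX j - σX i * σX i) * W i j = 0 := by linear_combination h1'
      rcases mul_eq_zero.mp h4 with h5 | h5
      · exfalso
        have h6 : (σX j - σX i) * (σX j + σX i) = 0 := by linear_combination h5
        rcases mul_eq_zero.mp h6 with h7 | h7
        · exact (sub_ne_zero.mpr (Ne.symm hne)) h7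
        · linarith
      · exact h5
    have hTW : D * W * Dinv = W := by
      ext i j
      rw [hTentry i j]
      by_cases hij : σX i = σX j
      · rw [hij, mul_comm (σX j) (W i j), mul_assoc, mul_inv_cancel₀ (hσne j), mul_one]
      · rw [hblock i j hij]; ring
    have hM1W : M = 1 - W := by
      rw [← hTW, hT]; simp
    have h1Wpsd : (1 - W).PosSemidef := hM1W ▸ hMpsd
    -- recover Z
    have hPVsym : (VX * VXᵀ)ᵀ = VX * VXᵀ := by
      rw [Matrix.transpose_mul, Matrix.transpose_transpose]
    have hPVidem : (VX * VXᵀ) * (VX * VXᵀ) = VX * VXᵀ := by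
      rw [Matrix.mul_assoc VX VXᵀ (VX * VXᵀ), ← Matrix.mul_assoc VXᵀ VX VXᵀ, hV,
        Matrix.one_mul]
    have htrPZ : Matrix.trace ((VX * VXᵀ) * Z) = nuclearNorm Z := by
      rw [Matrix.mul_assoc, Matrix.trace_mul_comm]
      exact htrWZ
    have hPZ : (VX * VXᵀ) * Z = Z := proj_eq_of_trace_eq hPVsym hPVidem htrPZ
    have htrPZt : Matrix.trace ((VX * VXᵀ) * Zᵀ) = nuclearNorm Zᵀ := by
      rw [nuclearNorm_transpose]
      calc Matrix.trace ((VX * VXᵀ) * Zᵀ) = Matrix.trace ((Z * (VX * VXᵀ))ᵀ) := by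
            rw [Matrix.transpose_mul, hPVsym]
        _ = Matrix.trace (Z * (VX * VXᵀ)) := Matrix.trace_transpose _
        _ = Matrix.trace ((VX * VXᵀ) * Z) := Matrix.trace_mul_comm _ _
        _ = nuclearNorm Z := htrPZ
    have hPZt : (VX * VXᵀ) * Zᵀ = Zᵀ := proj_eq_of_trace_eq hPVsym hPVidem htrPZt
    have hZP : Z * (VX * VXᵀ) = Z := by
      have h1 := congrArg Matrix.transpose hPZt
      rwa [Matrix.transpose_mul, Matrix.transpose_transpose, hPVsym] at h1
    have hZfinal : Z = VX * W * VXᵀ := by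
      calc Z = (VX * VXᵀ) * Z := hPZ.symm
        _ = (VX * VXᵀ) * (Z * (VX * VXᵀ)) := by rw [hZP]
        _ = VX * (VXᵀ * Z * VX) * VXᵀ := by simp only [Matrix.mul_assoc]
        _ = VX * W * VXᵀ := by rw [← hWdef]
    -- recover L
    have hPUsym : (UX * UXᵀ)ᵀ = UX * UXᵀ := by
      rw [Matrix.transpose_mul, Matrix.transpose_transpose]
    have hPUidem : (UX * UXᵀ) * (UX * UXᵀ) = UX * UXᵀ := by
      rw [Matrix.mul_assoc UX UXᵀ (UX * UXᵀ), ← Matrix.mul_assoc UXᵀ UX UXᵀ, hU,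
        Matrix.one_mul]
    have htrPL : Matrix.trace ((UX * UXᵀ) * L) = nuclearNorm L := by
      rw [Matrix.mul_assoc, Matrix.trace_mul_comm]
      exact htrML
    have hPL : (UX * UXᵀ) * L = L := proj_eq_of_trace_eq hPUsym hPUidem htrPL
    have htrPLt : Matrix.trace ((UX * UXᵀ) * Lᵀ) = nuclearNorm Lᵀ := by
      rw [nuclearNorm_transpose]
      calc Matrix.trace ((UX * UXᵀ) * Lᵀ) = Matrix.trace ((L * (UX * UXᵀ))ᵀ) := by
            rw [Matrix.transpose_mul, hPUsym]
        _ = Matrix.trace (L * (UX * UXᵀ)) := Matrix.trace_transpose _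
        _ = Matrix.trace ((UX * UXᵀ) * L) := Matrix.trace_mul_comm _ _
        _ = nuclearNorm L := htrPL
    have hPLt : (UX * UXᵀ) * Lᵀ = Lᵀ := proj_eq_of_trace_eq hPUsym hPUidem htrPLt
    have hLP : L * (UX * UXᵀ) = L := by
      have h1 := congrArg Matrix.transpose hPLt
      rwa [Matrix.transpose_mul, Matrix.transpose_transpose, hPUsym] at h1
    have hLfinal : L = UX * (1 - W) * UXᵀ := by
      calc L = (UX * UXᵀ) * L := hPL.symm
        _ = (UX * UXᵀ) * (L * (UX * UXᵀ)) := by rw [hLP]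
        _ = UX * (UXᵀ * L * UX) * UXᵀ := by simp only [Matrix.mul_assoc]
        _ = UX * (1 - W) * UXᵀ := by rw [← hMdef, hM1W]
    exact ⟨W, hblock, hWpsd, h1Wpsd, hZfinal, hLfinal⟩
  · rintro ⟨W, hblock, hWpsd, h1Wpsd, hZdef, hLdef⟩
    have hWsym : Wᵀ = W := herm_real hWpsd.1
    have hcomm : D * W = W * D := by
      ext i j
      rw [Matrix.diagonal_mul, Matrix.mul_diagonal]
      by_cases hij : σX i = σX j
      · rw [hij, mul_comm]
      · rw [hblock i j hij, mul_zero, zero_mul]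
    have hfeas : X = X * Z + L * X := by
      have hXZ : X * Z = UX * (D * W) * VXᵀ := by
        rw [hZdef, ← Matrix.mul_assoc, ← Matrix.mul_assoc, hXV]
        simp only [Matrix.mul_assoc]
      have hLX : L * X = UX * (D - D * W) * VXᵀ := by
        rw [hLdef, hXd]
        calc UX * (1 - W) * UXᵀ * (UX * D * VXᵀ)
            = UX * (1 - W) * (UXᵀ * UX) * (D * VXᵀ) := by simp only [Matrix.mul_assoc]
          _ = UX * ((1 - W) * D) * VXᵀ := by
              rw [hU, Matrix.mul_one]; simp only [Matrix.mul_assoc]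
          _ = UX * (D - W * D) * VXᵀ := by rw [Matrix.sub_mul, Matrix.one_mul]
          _ = UX * (D - D * W) * VXᵀ := by rw [hcomm]
      rw [hXZ, hLX, ← Matrix.add_mul, ← Matrix.mul_add]
      have he : D * W + (D - D * W) = D := by abel
      rw [he]
      exact hXd
    have hZpsd : Z.PosSemidef := by rw [hZdef]; exact psd_conj hWpsd VX
    have hLpsd : L.PosSemidef := by rw [hLdef]; exact psd_conj h1Wpsd UX
    have hZval : nuclearNorm Z = Matrix.trace W := by
      rw [nuclearNorm_psd hZpsd, hZdef, Matrix.trace_mul_cycle, hV, Matrix.one_mul]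
    have hLval : nuclearNorm L = (r : ℝ) - Matrix.trace W := by
      rw [nuclearNorm_psd hLpsd, hLdef, Matrix.trace_mul_cycle, hU, Matrix.one_mul,
        Matrix.trace_sub, Matrix.trace_one]
      simp
    refine ⟨hfeas, ?_⟩
    intro Z' L' hf'
    have hge := hlow Z' L' hf'
    rw [hZval, hLval]
    linarith
end

section
/- If rank(X) ≥ 1, then the heuristic LatLRR problem (minimize ‖Z‖_* + ‖L‖_* subject to X = X Z + L X) has at least two distinct optimal solutions; in particular, both (X† X, 0) and ((1/2) X† X, (1/2) X X†) are optimal solutions. -/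
open Matrix

lemma aux_isHermitian_transpose_mul_self {m n : Type*} [Fintype m] [Fintype n]
    (A : Matrix m n ℝ) : (Aᵀ * A).IsHermitian := by
  simpa [Matrix.conjTranspose_eq_transpose_of_trivial] using
    Matrix.isHermitian_conjTranspose_mul_self A

section Aux

variable {k : Type*} [Fintype k] [DecidableEq k]

/-- an eigenvalue of a Hermitian `M` with `M * M = c • M` satisfies `λ² = c λ`. -/
lemma aux_eig_sq {M : Matrix k k ℝ} (hM : M.IsHermitian) (c : ℝ)
    (h : M * M = c • M) (i : k) :
    hM.eigenvalues i ^ 2 = c * hM.eigenvalues i := by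
  have hv := hM.mulVec_eigenvectorBasis i
  have h2 : (M * M) *ᵥ ⇑(hM.eigenvectorBasis i)
      = (hM.eigenvalues i ^ 2) • ⇑(hM.eigenvectorBasis i) := by
    rw [← mulVec_mulVec, hv, mulVec_smul, hv, smul_smul, sq]
  rw [h, smul_mulVec, hv, smul_smul] at h2
  have hne : ⇑(hM.eigenvectorBasis i) ≠ 0 := by
    intro h0
    exact hM.eigenvectorBasis.orthonormal.ne_zero i (by ext x; exact congrFun h0 x)
  have h3 : (hM.eigenvalues i ^ 2 - c * hM.eigenvalues i) • ⇑(hM.eigenvectorBasis i) = 0 := by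
    rw [sub_smul, h2, sub_self]
  rcases smul_eq_zero.mp h3 with h4 | h4
  · linarith [h4]
  · exact absurd h4 hne

lemma aux_trace_eq_sum_eig {M : Matrix k k ℝ} (hM : M.IsHermitian) :
    Matrix.trace M = ∑ i, hM.eigenvalues i := by
  conv_lhs => rw [hM.spectral_theorem]
  rw [Unitary.conjStarAlgAut_apply, Matrix.trace_mul_comm, ← mul_assoc, Unitary.coe_star_mul_self, one_mul, trace_diagonal]
  simp

lemma aux_sum_sqrt_eig {M : Matrix k k ℝ} (hM : M.IsHermitian) (c : ℝ) (hc : 0 ≤ c)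
    (h : M * M = (c ^ 2) • M) :
    ∑ i, Real.sqrt (hM.eigenvalues i) = Matrix.trace M / c := by
  rw [aux_trace_eq_sum_eig hM, Finset.sum_div]
  apply Finset.sum_congr rfl
  intro i _
  have hq := aux_eig_sq hM (c ^ 2) h i
  have h0 : hM.eigenvalues i * (hM.eigenvalues i - c ^ 2) = 0 := by ring_nf; linarith [hq]
  rcases mul_eq_zero.mp h0 with h1 | h1
  · rw [h1]; simp
  · have h2 : hM.eigenvalues i = c ^ 2 := by linarith
    rw [h2, Real.sqrt_sq hc]
    by_cases hc0 : c = 0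
    · subst hc0; simp
    · rw [sq, mul_div_assoc, div_self hc0, mul_one]

lemma aux_nuclearNorm_smul_proj (Q : Matrix k k ℝ) (hQs : Qᵀ = Q) (hQi : Q * Q = Q)
    (c : ℝ) (hc : 0 ≤ c) :
    nuclearNorm (c • Q) = c * Matrix.trace Q := by
  have hM : (c • Q)ᴴ * (c • Q) = (c ^ 2) • Q := by
    rw [conjTranspose_eq_transpose_of_trivial, transpose_smul, hQs, smul_mul_assoc,
      mul_smul_comm, hQi, smul_smul, sq]
  have hMM : ((c • Q)ᴴ * (c • Q)) * ((c • Q)ᴴ * (c • Q)) = (c ^ 2) • ((c • Q)ᴴ * (c • Q)) := by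
    rw [hM, smul_mul_assoc, mul_smul_comm, hQi]
  unfold nuclearNorm
  rw [aux_sum_sqrt_eig (aux_isHermitian_transpose_mul_self (c • Q)) c hc (by rwa [conjTranspose_eq_transpose_of_trivial] at hMM),
    ← conjTranspose_eq_transpose_of_trivial, hM,
    trace_smul]
  by_cases hc0 : c = 0
  · subst hc0; simp
  · field_simp
    ring

omit [DecidableEq k] in
lemma aux_dot_CS (a b : k → ℝ) : a ⬝ᵥ b ≤ Real.sqrt (a ⬝ᵥ a) * Real.sqrt (b ⬝ᵥ b) := by
  have := Real.sum_mul_le_sqrt_mul_sqrt Finset.univ a b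
  simpa [dotProduct, sq] using this

omit [DecidableEq k] in
lemma aux_dot_self_idem {S : Matrix k k ℝ} (hSs : Sᵀ = S) (hSi : S * S = S) (u : k → ℝ) :
    (S *ᵥ u) ⬝ᵥ (S *ᵥ u) = u ⬝ᵥ (S *ᵥ u) := by
  rw [Matrix.dotProduct_mulVec (S *ᵥ u) S u, ← Matrix.mulVec_transpose, hSs, mulVec_mulVec,
    hSi, dotProduct_comm, dotProduct_mulVec, ← Matrix.mulVec_transpose, hSs]

lemma aux_trace_expand (A : Matrix k k ℝ) {H : Matrix k k ℝ} (hH : H.IsHermitian) :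
    Matrix.trace A = ∑ i, (⇑(hH.eigenvectorBasis i)) ⬝ᵥ (A *ᵥ ⇑(hH.eigenvectorBasis i)) := by
  set U : Matrix k k ℝ := (hH.eigenvectorUnitary : Matrix k k ℝ) with hU
  have h1 : Matrix.trace A = Matrix.trace (star U * (A * U)) := by
    rw [Matrix.trace_mul_comm, mul_assoc, Unitary.mul_star_self_of_mem hH.eigenvectorUnitary.2,
      mul_one]
  rw [h1, Matrix.trace]
  apply Finset.sum_congr rfl
  intro i _
  simp only [Matrix.diag_apply, Matrix.mul_apply, Matrix.star_apply, star_trivial,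
    dotProduct, Matrix.mulVec, dotProduct, hU,
    Matrix.IsHermitian.eigenvectorUnitary_apply]

lemma aux_dot_self_one {H : Matrix k k ℝ} (hH : H.IsHermitian) (i : k) :
    (⇑(hH.eigenvectorBasis i)) ⬝ᵥ (⇑(hH.eigenvectorBasis i)) = 1 := by
  have h := orthonormal_iff_ite.mp hH.eigenvectorBasis.orthonormal i i
  simp only [if_pos] at h
  rw [show (1:ℝ) = if i = i then (1:ℝ) else 0 by simp, ← h, PiLp.inner_apply]
  simp [dotProduct, sq]

/-- Key inequality: for a symmetric idempotent `Q`, `trace (Q * Z) ≤ ‖Z‖_*`. -/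
lemma aux_trace_mul_le_nuclearNorm (Q Z : Matrix k k ℝ) (hQs : Qᵀ = Q) (hQi : Q * Q = Q) :
    Matrix.trace (Q * Z) ≤ nuclearNorm Z := by
  have hH := aux_isHermitian_transpose_mul_self Z
  rw [aux_trace_expand (Q * Z) hH]
  unfold nuclearNorm
  apply Finset.sum_le_sum
  intro i _
  set u : k → ℝ := ⇑(hH.eigenvectorBasis i) with hu
  have e1 : u ⬝ᵥ ((Q * Z) *ᵥ u) = (Q *ᵥ u) ⬝ᵥ (Z *ᵥ u) := by
    rw [← Matrix.mulVec_mulVec, Matrix.dotProduct_mulVec u Q, ← Matrix.mulVec_transpose, hQs]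
  have h4 : u ⬝ᵥ u = 1 := aux_dot_self_one hH i
  have hQu : (Q *ᵥ u) ⬝ᵥ (Q *ᵥ u) ≤ 1 := by
    have hR : ((1 - Q) *ᵥ u) ⬝ᵥ ((1 - Q) *ᵥ u) = u ⬝ᵥ ((1 - Q) *ᵥ u) := by
      apply aux_dot_self_idem
      · rw [transpose_sub, transpose_one, hQs]
      · rw [sub_mul, mul_sub, mul_sub, one_mul, mul_one, hQi]
        simp
    have h2 : u ⬝ᵥ ((1 - Q) *ᵥ u) = u ⬝ᵥ u - u ⬝ᵥ (Q *ᵥ u) := by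
      rw [sub_mulVec, dotProduct_sub, one_mulVec]
    have h3 : (0:ℝ) ≤ ((1 - Q) *ᵥ u) ⬝ᵥ ((1 - Q) *ᵥ u) := by
      apply Finset.sum_nonneg; intro x _; exact mul_self_nonneg _
    rw [aux_dot_self_idem hQs hQi u]
    linarith [hR, h2, h3, h4]
  have hZu : (Z *ᵥ u) ⬝ᵥ (Z *ᵥ u) = hH.eigenvalues i := by
    rw [Matrix.dotProduct_mulVec (Z *ᵥ u) Z u, ← Matrix.mulVec_transpose,
      mulVec_mulVec]
    rw [show (Zᵀ * Z) *ᵥ u = hH.eigenvalues i • u from hH.mulVec_eigenvectorBasis i,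
      smul_dotProduct, h4, smul_eq_mul, mul_one]
  calc u ⬝ᵥ ((Q * Z) *ᵥ u) = (Q *ᵥ u) ⬝ᵥ (Z *ᵥ u) := e1
    _ ≤ Real.sqrt ((Q *ᵥ u) ⬝ᵥ (Q *ᵥ u)) * Real.sqrt ((Z *ᵥ u) ⬝ᵥ (Z *ᵥ u)) := aux_dot_CS _ _
    _ ≤ 1 * Real.sqrt (hH.eigenvalues i) := by
        apply mul_le_mul
        · exact Real.sqrt_le_one.mpr hQu
        · rw [hZu]
        · exact Real.sqrt_nonneg _
        · norm_num
    _ = Real.sqrt (hH.eigenvalues i) := one_mul _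

end Aux

/-- If `rank X ≥ 1`, the heuristic LatLRR problem has at least two distinct optimal
solutions; in particular both `(X† X, 0)` and `((1/2) X† X, (1/2) X X†)` are optimal. -/
theorem stmt17 {m n : ℕ} (X : Matrix (Fin m) (Fin n) ℝ) (hX : 1 ≤ X.rank)
    (P : Matrix (Fin n) (Fin m) ℝ) (hP : IsMoorePenroseInv X P) :
    (X = X * (P * X) + (0 : Matrix (Fin m) (Fin m) ℝ) * X ∧
      ∀ (Z : Matrix (Fin n) (Fin n) ℝ) (L : Matrix (Fin m) (Fin m) ℝ),
        X = X * Z + L * X →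
          nuclearNorm (P * X) + nuclearNorm (0 : Matrix (Fin m) (Fin m) ℝ)
            ≤ nuclearNorm Z + nuclearNorm L) ∧
    (X = X * (((1 : ℝ)/2) • (P * X)) + (((1 : ℝ)/2) • (X * P)) * X ∧
      ∀ (Z : Matrix (Fin n) (Fin n) ℝ) (L : Matrix (Fin m) (Fin m) ℝ),
        X = X * Z + L * X →
          nuclearNorm (((1 : ℝ)/2) • (P * X)) + nuclearNorm (((1 : ℝ)/2) • (X * P))
            ≤ nuclearNorm Z + nuclearNorm L) ∧
    (P * X, (0 : Matrix (Fin m) (Fin m) ℝ)) ≠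
      (((1 : ℝ)/2) • (P * X), ((1 : ℝ)/2) • (X * P)) := by
  obtain ⟨h1, h2, h3, h4⟩ := hP
  have hQ1i : (P * X) * (P * X) = P * X := by
    rw [← Matrix.mul_assoc, Matrix.mul_assoc P X P, ← Matrix.mul_assoc, h2]
  have hQ2i : (X * P) * (X * P) = X * P := by
    rw [← Matrix.mul_assoc, h1]
  have htr : Matrix.trace (P * X) = Matrix.trace (X * P) := Matrix.trace_mul_comm P X
  have hval1 : nuclearNorm (P * X) = Matrix.trace (P * X) := by
    have := aux_nuclearNorm_smul_proj (P * X) h4 hQ1i 1 zero_le_one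
    rwa [one_smul, one_mul] at this
  have hval0 : nuclearNorm (0 : Matrix (Fin m) (Fin m) ℝ) = 0 := by
    have := aux_nuclearNorm_smul_proj (0 : Matrix (Fin m) (Fin m) ℝ) (by simp) (by simp)
      1 zero_le_one
    simpa using this
  have hval2 : nuclearNorm (((1 : ℝ)/2) • (P * X)) = (1/2) * Matrix.trace (P * X) :=
    aux_nuclearNorm_smul_proj (P * X) h4 hQ1i (1/2) (by norm_num)
  have hval3 : nuclearNorm (((1 : ℝ)/2) • (X * P)) = (1/2) * Matrix.trace (X * P) :=
    aux_nuclearNorm_smul_proj (X * P) h3 hQ2i (1/2) (by norm_num)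
  have hlow : ∀ (Z : Matrix (Fin n) (Fin n) ℝ) (L : Matrix (Fin m) (Fin m) ℝ),
      X = X * Z + L * X →
      Matrix.trace (P * X) ≤ nuclearNorm Z + nuclearNorm L := by
    intro Z L hfeas
    have hsplit : Matrix.trace (P * X) = Matrix.trace ((P * X) * Z)
        + Matrix.trace ((X * P) * L) := by
      calc Matrix.trace (P * X) = Matrix.trace (P * (X * Z + L * X)) := by rw [← hfeas]
        _ = Matrix.trace ((P * X) * Z) + Matrix.trace (P * (L * X)) := by
            rw [Matrix.mul_add, trace_add, ← Matrix.mul_assoc]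
        _ = Matrix.trace ((P * X) * Z) + Matrix.trace ((X * P) * L) := by
            rw [show P * (L * X) = (P * L) * X from (Matrix.mul_assoc P L X).symm,
              Matrix.trace_mul_comm (P * L) X, ← Matrix.mul_assoc]
    rw [hsplit]
    exact add_le_add (aux_trace_mul_le_nuclearNorm (P * X) Z h4 hQ1i)
      (aux_trace_mul_le_nuclearNorm (X * P) L h3 hQ2i)
  have hXne : X ≠ 0 := by
    intro h0
    rw [h0] at hX
    simp [Matrix.rank_zero] at hX
  have hPXne : P * X ≠ 0 := by
    intro h0
    apply hXne
    calc X = X * P * X := h1.symm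
      _ = X * (P * X) := Matrix.mul_assoc X P X
      _ = X * (0 : Matrix (Fin n) (Fin n) ℝ) := by rw [h0]
      _ = 0 := Matrix.mul_zero X
  refine ⟨⟨?_, ?_⟩, ⟨?_, ?_⟩, ?_⟩
  · rw [← Matrix.mul_assoc, h1, Matrix.zero_mul, add_zero]
  · intro Z L hfeas
    rw [hval1, hval0, add_zero]
    exact hlow Z L hfeas
  · rw [Matrix.mul_smul, Matrix.smul_mul, ← Matrix.mul_assoc, h1, ← add_smul]
    norm_num
  · intro Z L hfeas
    rw [hval2, hval3, ← htr]
    calc (1/2 : ℝ) * Matrix.trace (P * X) + 1/2 * Matrix.trace (P * X)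
        = Matrix.trace (P * X) := by ring
      _ ≤ nuclearNorm Z + nuclearNorm L := hlow Z L hfeas
  · intro hcontra
    have hfst : P * X = ((1 : ℝ)/2) • (P * X) := congrArg Prod.fst hcontra
    have h0 : ((1:ℝ) - 1/2) • (P * X) = 0 := by
      rw [sub_smul, one_smul, ← hfst, sub_self]
    rcases smul_eq_zero.mp h0 with h5 | h5
    · norm_num at h5
    · exact hPXne h5
end
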